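/- Assume P(lim_{|j|→∞} ‖Y_j‖ = 0) = 1. Let H be a nonnegative, shift invariant (H(Bx) = H(x)), α-homogeneous (H(tx) = t^α H(x) for all t > 0) measurable function on E. Then ϑ · E[H(Q)] = E[H(Θ) · 1{I(Θ) = 0}] = E[H(Θ) / Σ_{j∈ℤ} ‖Θ_j‖^α]; in particular, the three quantities E[H(Q)], E[H(Θ)·1{I(Θ)=0}], E[H(Θ)/Σ_{j∈ℤ}‖Θ_j‖^α] are simultaneously finite or infinite. -/

import Mathlib

open MeasureTheory ProbabilityTheory Set Filter
open scoped ENNReal NNReal Topology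

noncomputable section

/-- The iterated backshift operator: `(B^k x) j = x (j - k)`. -/
def backshift {V : Type*} (k : ℤ) (x : ℤ → V) : ℤ → V := fun j => x (j - k)

/-- `InfargmaxAt x j` is the event `I(x) = j` for the infargmax functional `I`:
the first time the supremum of the norms is achieved is `j`, i.e.
`sup_{i<j} ‖x_i‖ < ‖x_j‖` and `sup_{i>j} ‖x_i‖ ≤ ‖x_j‖`.  (`I(x) ∈ ℤ` is then
expressed as `∃ j, InfargmaxAt x j`.) -/
def InfargmaxAt {V : Type*} [NormedAddCommGroup V] (x : ℤ → V) (j : ℤ) : Prop :=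
  (⨆ i : {i : ℤ // i < j}, (‖x i.1‖₊ : ℝ≥0∞)) < (‖x j‖₊ : ℝ≥0∞) ∧
    (⨆ i : {i : ℤ // j < i}, (‖x i.1‖₊ : ℝ≥0∞)) ≤ (‖x j‖₊ : ℝ≥0∞)

namespace S14
set_option linter.unusedSectionVars false

variable {V : Type*} [NormedAddCommGroup V]

lemma backshift_apply (k : ℤ) (x : ℤ → V) (j : ℤ) : backshift k x j = x (j - k) := rfl

lemma backshift_backshift (k l : ℤ) (x : ℤ → V) :
    backshift k (backshift l x) = backshift (k + l) x := by
  funext j; simp [backshift, sub_sub]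

lemma backshift_zero (x : ℤ → V) : backshift 0 x = x := by funext j; simp [backshift]

lemma backshift_smul (k : ℤ) (c : ℝ) (x : ℤ → V) [Module ℝ V] :
    backshift k (c • x) = c • backshift k x := rfl

lemma measurable_backshift [MeasurableSpace V] (k : ℤ) :
    Measurable (backshift (V := V) k) :=
  measurable_pi_lambda _ fun j => measurable_pi_apply _

/-- reindexing of subtype sups used for shifting `InfargmaxAt`. -/
lemma iSup_lt_shift (f : ℤ → ℝ≥0∞) (k j : ℤ) :
    (⨆ i : {i : ℤ // i < j}, f (i.1 - k)) = ⨆ i : {i : ℤ // i < j - k}, f i.1 := by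
  apply le_antisymm
  · exact iSup_le fun i => le_iSup_of_le ⟨i.1 - k, by omega⟩ le_rfl
  · refine iSup_le fun i => le_iSup_of_le (⟨i.1 + k, by omega⟩ : {i : ℤ // i < j}) ?_
    simp

lemma iSup_gt_shift (f : ℤ → ℝ≥0∞) (k j : ℤ) :
    (⨆ i : {i : ℤ // j < i}, f (i.1 - k)) = ⨆ i : {i : ℤ // j - k < i}, f i.1 := by
  apply le_antisymm
  · exact iSup_le fun i => le_iSup_of_le ⟨i.1 - k, by omega⟩ le_rfl
  · refine iSup_le fun i => le_iSup_of_le (⟨i.1 + k, by omega⟩ : {i : ℤ // j < i}) ?_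
    simp

lemma infargmaxAt_backshift (k : ℤ) (x : ℤ → V) (j : ℤ) :
    InfargmaxAt (backshift k x) j ↔ InfargmaxAt x (j - k) := by
  unfold InfargmaxAt
  simp only [backshift_apply]
  rw [iSup_lt_shift (fun i => (‖x i‖₊ : ℝ≥0∞)) k j, iSup_gt_shift (fun i => (‖x i‖₊ : ℝ≥0∞)) k j]

lemma nnnorm_smul_pos {c : ℝ} (hc : 0 < c) [Module ℝ V] [NormSMulClass ℝ V] (v : V) :
    (‖c • v‖₊ : ℝ≥0∞) = ENNReal.ofReal c * ‖v‖₊ := by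
  rw [nnnorm_smul]
  push_cast
  rw [← enorm_eq_nnnorm c, Real.enorm_eq_ofReal hc.le]

lemma infargmaxAt_smul {c : ℝ} (hc : 0 < c) [NormedSpace ℝ V] (x : ℤ → V) (j : ℤ) :
    InfargmaxAt (c • x) j ↔ InfargmaxAt x j := by
  have hc0 : ENNReal.ofReal c ≠ 0 := by simp [hc]
  have hct : ENNReal.ofReal c ≠ ∞ := ENNReal.ofReal_ne_top
  unfold InfargmaxAt
  simp only [Pi.smul_apply, nnnorm_smul_pos hc]
  rw [← ENNReal.mul_iSup, ← ENNReal.mul_iSup]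
  rw [ENNReal.mul_lt_mul_iff_right hc0 hct, ENNReal.mul_le_mul_iff_right hc0 hct]

lemma infargmaxAt_le {x : ℤ → V} {j : ℤ} (h : InfargmaxAt x j) (i : ℤ) :
    (‖x i‖₊ : ℝ≥0∞) ≤ (‖x j‖₊ : ℝ≥0∞) := by
  rcases lt_trichotomy i j with hij | rfl | hij
  · exact le_of_lt (lt_of_le_of_lt (le_iSup (fun i : {i : ℤ // i < j} => (‖x i.1‖₊ : ℝ≥0∞)) ⟨i, hij⟩) h.1)
  · exact le_rfl
  · exact le_trans (le_iSup (fun i : {i : ℤ // j < i} => (‖x i.1‖₊ : ℝ≥0∞)) ⟨i, hij⟩) h.2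

lemma infargmaxAt_pos {x : ℤ → V} {j : ℤ} (h : InfargmaxAt x j) :
    (0 : ℝ≥0∞) < ‖x j‖₊ := lt_of_le_of_lt zero_le h.1

lemma infargmaxAt_unique {x : ℤ → V} {j k : ℤ} (hj : InfargmaxAt x j) (hk : InfargmaxAt x k) :
    j = k := by
  by_contra hne
  wlog hlt : j < k generalizing j k
  · exact this hk hj (Ne.symm hne) (by omega)
  have h1 : (‖x j‖₊ : ℝ≥0∞) ≤ ⨆ i : {i : ℤ // i < k}, (‖x i.1‖₊ : ℝ≥0∞) :=
    le_iSup (fun i : {i : ℤ // i < k} => (‖x i.1‖₊ : ℝ≥0∞)) ⟨j, hlt⟩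
  exact absurd (lt_of_le_of_lt h1 hk.1) (not_lt.mpr (infargmaxAt_le hj k))

lemma measurableSet_infargmaxAt [MeasurableSpace V] [BorelSpace V] (j : ℤ) :
    MeasurableSet {x : ℤ → V | InfargmaxAt x j} := by
  have hmeas : ∀ i : ℤ, Measurable fun x : ℤ → V => (‖x i‖₊ : ℝ≥0∞) := fun i =>
    (measurable_pi_apply i).nnnorm.coe_nnreal_ennreal
  have h1 : Measurable fun x : ℤ → V => ⨆ i : {i : ℤ // i < j}, (‖x i.1‖₊ : ℝ≥0∞) :=
    Measurable.iSup fun i => hmeas i.1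
  have h2 : Measurable fun x : ℤ → V => ⨆ i : {i : ℤ // j < i}, (‖x i.1‖₊ : ℝ≥0∞) :=
    Measurable.iSup fun i => hmeas i.1
  have m1 : MeasurableSet {x : ℤ → V | (⨆ i : {i : ℤ // i < j}, (‖x i.1‖₊ : ℝ≥0∞)) < (‖x j‖₊ : ℝ≥0∞)} :=
    measurableSet_lt h1 (hmeas j)
  have m2 : MeasurableSet {x : ℤ → V | (⨆ i : {i : ℤ // j < i}, (‖x i.1‖₊ : ℝ≥0∞)) ≤ (‖x j‖₊ : ℝ≥0∞)} :=
    measurableSet_le h2 (hmeas j)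
  exact m1.inter m2


end S14

namespace S14
set_option linter.unusedSectionVars false
variable {V : Type*} [NormedAddCommGroup V]

/-- T x: the norms tend to zero along cofinite. -/
def T (x : ℤ → V) : Prop := Tendsto (fun k : ℤ => ‖x k‖) cofinite (𝓝 0)

lemma T.finite_exceed {x : ℤ → V} (hT : T x) {ε : ℝ≥0} (hε : 0 < ε) :
    {j : ℤ | ε ≤ ‖x j‖₊}.Finite := by
  have h := Metric.tendsto_nhds.mp hT (ε : ℝ) (by exact_mod_cast hε)
  rw [Filter.eventually_cofinite] at h
  refine h.subset fun j hj => ?_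
  simp only [mem_setOf_eq, not_lt, Real.dist_eq, sub_zero] at *
  rw [abs_of_nonneg (norm_nonneg _)]
  exact_mod_cast hj

lemma T.smul {x : ℤ → V} (hT : T x) (c : ℝ) [Module ℝ V] [NormSMulClass ℝ V] : T (c • x) := by
  have : (fun k : ℤ => ‖(c • x) k‖) = fun k => ‖c‖ * ‖x k‖ := by
    funext k; simp [norm_smul]
  rw [T, this]
  simpa using hT.const_mul ‖c‖

lemma T.smul_iff {x : ℤ → V} {c : ℝ} (hc : c ≠ 0) [Module ℝ V] [NormSMulClass ℝ V] :
    T (c • x) ↔ T x := by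
  constructor
  · intro h
    have := h.smul c⁻¹
    rwa [smul_smul, inv_mul_cancel₀ hc, one_smul] at this
  · exact fun h => h.smul c

lemma measurableSet_T [MeasurableSpace V] [BorelSpace V] :
    MeasurableSet {x : ℤ → V | T x} := by
  have hrw : {x : ℤ → V | T x} =
      ⋂ (n : ℕ), ⋃ (N : ℕ), ⋂ (j : ℤ),
        {x : ℤ → V | N < j.natAbs → ‖x j‖ < 1 / (n + 1)} := by
    ext x
    simp only [mem_setOf_eq, mem_iInter, mem_iUnion]
    constructor
    · intro hx n
      have hfin : {j : ℤ | ((1 : ℝ≥0) / (n + 1)) ≤ ‖x j‖₊}.Finite := by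
        refine hx.finite_exceed ?_
        positivity
      have hbdd : BddAbove (Int.natAbs '' {j : ℤ | ((1 : ℝ≥0) / (n + 1)) ≤ ‖x j‖₊}) :=
        (hfin.image _).bddAbove
      obtain ⟨N, hN⟩ := hbdd
      refine ⟨N, fun j hj => ?_⟩
      by_contra hcon
      push_neg at hcon
      have hmem : j ∈ {j : ℤ | ((1 : ℝ≥0) / (n + 1)) ≤ ‖x j‖₊} := by
        simp only [mem_setOf_eq]
        have : ((1 : ℝ≥0) / (n + 1) : ℝ) ≤ ‖x j‖ := by
          calc ((1 : ℝ≥0) / (n + 1) : ℝ) = 1 / (n + 1) := by push_cast; ring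
          _ ≤ ‖x j‖ := hcon
        exact_mod_cast this
      exact absurd (hN (mem_image_of_mem _ hmem)) (not_le.mpr hj)
    · intro hx
      rw [T, Metric.tendsto_nhds]
      intro ε hε
      obtain ⟨n, hn⟩ := exists_nat_one_div_lt hε
      obtain ⟨N, hN⟩ := hx n
      rw [Filter.eventually_cofinite]
      refine (Set.finite_Icc (-(N : ℤ)) N).subset fun j hj => ?_
      simp only [mem_setOf_eq, not_lt, Real.dist_eq, sub_zero] at hj
      rw [mem_Icc]
      by_contra hcon
      have habs : N < j.natAbs := by omega
      have := hN j habs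
      have h2 : ‖x j‖ < ε := lt_trans (by push_cast at this ⊢; linarith) hn
      rw [abs_of_nonneg (norm_nonneg _)] at hj
      linarith
  rw [hrw]
  refine MeasurableSet.iInter fun n => MeasurableSet.iUnion fun N => MeasurableSet.iInter fun j => ?_
  by_cases h : (N : ℕ) < j.natAbs
  · have : {x : ℤ → V | (N : ℕ) < j.natAbs → ‖x j‖ < 1 / (n + 1)}
        = {x : ℤ → V | ‖x j‖ < 1 / (n + 1)} := by
      ext x; simp [h]
    rw [this]
    exact measurableSet_lt ((measurable_pi_apply j).norm) measurable_const
  · have : {x : ℤ → V | (N : ℕ) < j.natAbs → ‖x j‖ < 1 / (n + 1)} = univ := by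
      ext x; simp [h]
    rw [this]
    exact MeasurableSet.univ

/-- existence of the infargmax for a nonzero sequence tending to zero. -/
lemma T.exists_infargmaxAt {x : ℤ → V} (hT : T x) (hx : x ≠ 0) :
    ∃ j, InfargmaxAt x j := by
  obtain ⟨j₀, hj₀⟩ : ∃ j, x j ≠ 0 := by
    by_contra hcon; push_neg at hcon; exact hx (funext hcon)
  have hε : 0 < ‖x j₀‖₊ := by simpa using hj₀
  -- the global max is attained
  have hF : {j : ℤ | ‖x j₀‖₊ ≤ ‖x j‖₊}.Finite := hT.finite_exceed hε
  have hFne : hF.toFinset.Nonempty := ⟨j₀, by simp⟩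
  set b : ℝ≥0 := hF.toFinset.sup' hFne (fun j => ‖x j‖₊) with hb
  have hbge : ∀ i : ℤ, ‖x i‖₊ ≤ b := by
    intro i
    by_cases hi : ‖x j₀‖₊ ≤ ‖x i‖₊
    · exact Finset.le_sup' (fun j => ‖x j‖₊) (by simpa using hi)
    · exact le_trans (le_of_not_ge hi) (Finset.le_sup' (fun j => ‖x j‖₊) (by simp : j₀ ∈ hF.toFinset))
  have hbpos : 0 < b := lt_of_lt_of_le hε (hbge j₀)
  -- the set of argmaxes, within the finite set F2
  have hF2 : {j : ℤ | b / 2 ≤ ‖x j‖₊}.Finite := hT.finite_exceed (by positivity)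
  obtain ⟨j₁, hj₁mem, hj₁⟩ : ∃ j ∈ hF.toFinset, b = ‖x j‖₊ := Finset.exists_mem_eq_sup' hFne _
  set G : Finset ℤ := hF2.toFinset.filter (fun j => ‖x j‖₊ = b) with hG
  have hGne : G.Nonempty := by
    refine ⟨j₁, ?_⟩
    simp only [hG, Finset.mem_filter, Set.Finite.mem_toFinset, mem_setOf_eq]
    exact ⟨le_trans (by exact half_le_self b.2) (le_of_eq hj₁), hj₁.symm⟩
  set js : ℤ := G.min' hGne with hjs
  have hjsb : ‖x js‖₊ = b := by
    have := G.min'_mem hGne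
    simp only [hG, Finset.mem_filter] at this
    exact this.2
  -- all strictly-smaller-index values are < b, uniformly
  set W : Finset ℤ := hF2.toFinset.filter (fun j => j < js) with hW
  set β : ℝ≥0 := W.sup (fun j => ‖x j‖₊) with hβ
  have hβlt : β < b := by
    rw [hβ]
    refine Finset.sup_lt_iff hbpos |>.mpr fun i hi => ?_
    simp only [hW, Finset.mem_filter, Set.Finite.mem_toFinset] at hi
    refine lt_of_le_of_ne (hbge i) fun hib => ?_
    have : i ∈ G := by
      simp only [hG, Finset.mem_filter, Set.Finite.mem_toFinset, mem_setOf_eq]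
      exact ⟨hi.1, hib⟩
    exact absurd (G.min'_le i this) (not_le.mpr hi.2)
  have hhalf : b / 2 < b := half_lt_self hbpos
  have hbound : ∀ i : ℤ, i < js → ‖x i‖₊ ≤ max β (b / 2) := by
    intro i hi
    by_cases h2 : b / 2 ≤ ‖x i‖₊
    · refine le_max_of_le_left ?_
      refine Finset.le_sup (f := fun j => ‖x j‖₊) ?_
      simp only [hW, Finset.mem_filter, Set.Finite.mem_toFinset, mem_setOf_eq]
      exact ⟨h2, hi⟩
    · exact le_max_of_le_right (le_of_not_ge h2)
  refine ⟨js, ?_, ?_⟩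
  · calc (⨆ i : {i : ℤ // i < js}, (‖x i.1‖₊ : ℝ≥0∞))
        ≤ ((max β (b / 2) : ℝ≥0) : ℝ≥0∞) := by
          exact iSup_le fun i => by exact_mod_cast hbound i.1 i.2
      _ < ((b : ℝ≥0) : ℝ≥0∞) := by
          exact_mod_cast max_lt hβlt hhalf
      _ = (‖x js‖₊ : ℝ≥0∞) := by rw [hjsb]
  · refine iSup_le fun i => ?_
    rw [hjsb]
    exact_mod_cast hbge i.1


end S14

namespace S14

lemma lint_tail {α : ℝ} (hα : 0 < α) {b : ℝ} (hb : 0 < b) :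
    ∫⁻ r in Ioi b, ENNReal.ofReal (α * r ^ (-α - 1)) = ENNReal.ofReal (b ^ (-α)) := by
  have hlt : (-α - 1 : ℝ) < -1 := by linarith
  have h1 : IntegrableOn (fun r : ℝ => α * r ^ (-α - 1)) (Ioi b) :=
    (integrableOn_Ioi_rpow_of_lt hlt hb).const_mul α
  rw [← ofReal_integral_eq_lintegral_ofReal h1 ?_]
  · congr 1
    rw [MeasureTheory.integral_const_mul, integral_Ioi_rpow_of_lt hlt hb]
    have h2 : (-α - 1 + 1 : ℝ) = -α := by ring
    rw [h2]
    field_simp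
  · refine (ae_restrict_iff' measurableSet_Ioi).mpr (ae_of_all _ fun r hr => ?_)
    have hr0 : (0:ℝ) < r := lt_trans hb hr
    positivity

/-- main scaling integral: `∫_0^∞ 1{rc>1} X α r^{-α-1} dr = X c^α`. -/
lemma lint_scale {α : ℝ} (hα : 0 < α) (X : ℝ≥0∞) {c : ℝ} (hc : 0 ≤ c) :
    ∫⁻ r in Ioi (0:ℝ), (if 1 < r * c then X else 0) * ENNReal.ofReal (α * r ^ (-α - 1))
      = X * ENNReal.ofReal (c ^ α) := by
  rcases eq_or_lt_of_le hc with hc0 | hc0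
  · simp only [← hc0, mul_zero]
    rw [Real.zero_rpow hα.ne']
    simp only [mul_zero, ENNReal.ofReal_zero]
    rw [← lintegral_zero (μ := volume.restrict (Ioi (0:ℝ)))]
    refine lintegral_congr fun r => ?_
    norm_num
  · have hinv : (0:ℝ) < c⁻¹ := by positivity
    have hiff : ∀ r : ℝ, (1 < r * c ↔ c⁻¹ < r) := by
      intro r; rw [inv_eq_one_div, div_lt_iff₀ hc0]
    have hstep : ∫⁻ r in Ioi (0:ℝ), (if 1 < r * c then X else 0) * ENNReal.ofReal (α * r ^ (-α - 1))
        = ∫⁻ r in Ioi (0:ℝ),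
            (Ioi c⁻¹).indicator (fun r => X * ENNReal.ofReal (α * r ^ (-α - 1))) r := by
      refine setLIntegral_congr_fun measurableSet_Ioi fun r _ => ?_
      by_cases h : 1 < r * c
      · rw [if_pos h, Set.indicator_of_mem (by rw [mem_Ioi]; exact (hiff r).mp h)]
      · rw [if_neg h, Set.indicator_of_notMem (by rw [mem_Ioi]; exact fun hh => h ((hiff r).mpr hh)), zero_mul]
    rw [hstep, lintegral_indicator measurableSet_Ioi, Measure.restrict_restrict measurableSet_Ioi]
    have hss : Ioi c⁻¹ ∩ Ioi (0:ℝ) = Ioi c⁻¹ := inter_eq_left.mpr (Ioi_subset_Ioi hinv.le)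
    rw [hss, lintegral_const_mul X (by fun_prop), lint_tail hα hinv]
    congr 1
    rw [Real.inv_rpow hc, Real.rpow_neg hc, inv_inv]

end S14

namespace S14
set_option linter.unusedSectionVars false

/-- `{0,1}`-valued indicator of a proposition. -/
def ind (p : Prop) : ℝ≥0∞ := @ite _ p (Classical.propDecidable p) 1 0

lemma ind_pos {p : Prop} (h : p) : ind p = 1 := by simp [ind, h]
lemma ind_neg {p : Prop} (h : ¬p) : ind p = 0 := by simp [ind, h]
lemma ind_congr {p q : Prop} (h : p ↔ q) : ind p = ind q := by
  by_cases hp : p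
  · rw [ind_pos hp, ind_pos (h.mp hp)]
  · rw [ind_neg hp, ind_neg (fun hq => hp (h.mpr hq))]
lemma ind_mul_ind (p q : Prop) : ind p * ind q = ind (p ∧ q) := by
  by_cases hp : p <;> by_cases hq : q <;>
    simp [ind_pos, ind_neg, hp, hq]
lemma ind_le_one (p : Prop) : ind p ≤ 1 := by
  by_cases hp : p <;> simp [ind_pos, ind_neg, hp]
lemma ind_eq_indicator {γ : Type*} (p : γ → Prop) :
    (fun x => ind (p x)) = Set.indicator {x | p x} (fun _ => (1 : ℝ≥0∞)) := by
  funext x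
  by_cases h : p x <;> simp [ind, Set.indicator, h]
lemma measurable_ind {γ : Type*} [MeasurableSpace γ] {p : γ → Prop}
    (hp : MeasurableSet {x | p x}) : Measurable fun x => ind (p x) := by
  rw [ind_eq_indicator]
  exact measurable_const.indicator hp
lemma lintegral_mul_ind {γ : Type*} [MeasurableSpace γ] (μ : Measure γ)
    (f : γ → ℝ≥0∞) {S : Set γ} (hS : MeasurableSet S) :
    ∫⁻ a, f a * ind (a ∈ S) ∂μ = ∫⁻ a in S, f a ∂μ := by
  rw [← lintegral_indicator hS]
  refine lintegral_congr fun a => ?_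
  by_cases h : a ∈ S
  · rw [ind_pos h, Set.indicator_of_mem h, mul_one]
  · rw [ind_neg h, Set.indicator_of_notMem h, mul_zero]

variable {V : Type*} [NormedAddCommGroup V]

lemma enn_le_iff (v w : V) : (‖v‖₊ : ℝ≥0∞) ≤ (‖w‖₊ : ℝ≥0∞) ↔ ‖v‖ ≤ ‖w‖ := by
  rw [ENNReal.coe_le_coe]
  exact_mod_cast Iff.rfl
lemma one_lt_enn (v : V) : (1 : ℝ≥0∞) < (‖v‖₊ : ℝ≥0∞) ↔ 1 < ‖v‖ := by
  rw [show ((1:ℝ≥0∞)) = ((1 : ℝ≥0) : ℝ≥0∞) by simp, ENNReal.coe_lt_coe]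
  exact_mod_cast Iff.rfl

/-- real-valued running supremum of the norms. -/
def rsup (y : ℤ → V) : ℝ := ⨆ j : ℤ, ‖y j‖

lemma rsup_backshift (k : ℤ) (x : ℤ → V) : rsup (backshift k x) = rsup x := by
  unfold rsup
  rw [iSup, iSup]
  congr 1
  ext r
  constructor
  · rintro ⟨j, rfl⟩; exact ⟨j - k, rfl⟩
  · rintro ⟨j, rfl⟩; exact ⟨j + k, by simp [backshift]⟩

lemma rsup_eq_of_infargmaxAt {x : ℤ → V} (h : InfargmaxAt x 0) : rsup x = ‖x 0‖ := by
  have hle : ∀ j, ‖x j‖ ≤ ‖x 0‖ := fun j => (enn_le_iff _ _).mp (infargmaxAt_le h j)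
  unfold rsup
  refine le_antisymm (ciSup_le hle) (le_ciSup (f := fun j : ℤ => ‖x j‖) ⟨‖x 0‖, ?_⟩ 0)
  rintro r ⟨j, rfl⟩
  exact hle j

/-- the `α`-sum functional `Σ_j ‖y_j‖^α`. -/
def SS (α : ℝ) (y : ℤ → V) : ℝ≥0∞ := ∑' j : ℤ, (‖y j‖₊ : ℝ≥0∞) ^ α

lemma SS_backshift (α : ℝ) (k : ℤ) (x : ℤ → V) : SS α (backshift k x) = SS α x :=
  (Equiv.subRight k).tsum_eq (fun j => (‖x j‖₊ : ℝ≥0∞) ^ α)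

lemma SS_smul {α : ℝ} (hα : 0 < α) {c : ℝ} (hc : 0 < c) [NormedSpace ℝ V] (x : ℤ → V) :
    SS α (c • x) = ENNReal.ofReal c ^ α * SS α x := by
  unfold SS
  rw [← ENNReal.tsum_mul_left]
  refine tsum_congr fun j => ?_
  rw [Pi.smul_apply, nnnorm_smul_pos hc, ENNReal.mul_rpow_of_nonneg _ _ hα.le]

/-- first exceedance (of level 1) at `-m`. -/
def Em (m : ℕ) : Set (ℤ → V) :=
  {y | 1 < ‖y (-(m : ℤ))‖ ∧ ∀ i : ℤ, i ≤ -(m : ℤ) - 1 → ‖y i‖ ≤ 1}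

/-- last exceedance (of level 1) at `m`. -/
def LEm (m : ℕ) : Set (ℤ → V) :=
  {y | 1 < ‖y (m : ℤ)‖ ∧ ∀ i : ℤ, (m : ℤ) + 1 ≤ i → ‖y i‖ ≤ 1}

lemma Em_unique {y : ℤ → V} {m l : ℕ} (hm : y ∈ Em m) (hl : y ∈ Em l) : m = l := by
  by_contra hne
  wlog hlt : m < l generalizing m l
  · exact this hl hm (Ne.symm hne) (by omega)
  exact absurd (hm.2 (-(l:ℤ)) (by omega)) (not_le.mpr hl.1)

lemma LEm_unique {y : ℤ → V} {m l : ℕ} (hm : y ∈ LEm m) (hl : y ∈ LEm l) : m = l := by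
  by_contra hne
  wlog hlt : m < l generalizing m l
  · exact this hl hm (Ne.symm hne) (by omega)
  exact absurd (hm.2 (l:ℤ) (by omega)) (not_le.mpr hl.1)

lemma finite_exceed_one {y : ℤ → V} (hT : T y) : {j : ℤ | 1 < ‖y j‖}.Finite := by
  refine (hT.finite_exceed (ε := 1) one_pos).subset fun j hj => ?_
  simp only [mem_setOf_eq] at *
  have : (1:ℝ) ≤ ‖y j‖ := le_of_lt hj
  exact_mod_cast this

lemma exists_Em {y : ℤ → V} (hT : T y) (h0 : 1 < ‖y 0‖) : ∃ m : ℕ, y ∈ Em m := by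
  have hF : {j : ℤ | 1 < ‖y j‖}.Finite := finite_exceed_one hT
  have h0mem : (0:ℤ) ∈ hF.toFinset.filter (fun j => j ≤ 0) := by
    simp [h0]
  have hne : (hF.toFinset.filter (fun j => j ≤ 0)).Nonempty := ⟨0, h0mem⟩
  set i₀ : ℤ := (hF.toFinset.filter (fun j => j ≤ 0)).min' hne with hi₀
  have hi₀mem := (hF.toFinset.filter (fun j => j ≤ 0)).min'_mem hne
  simp only [Finset.mem_filter, Set.Finite.mem_toFinset, mem_setOf_eq] at hi₀mem
  refine ⟨(-i₀).toNat, ?_, ?_⟩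
  · rw [show -((-i₀).toNat : ℤ) = i₀ by omega]
    exact hi₀mem.1
  · intro i hi
    rw [show -((-i₀).toNat : ℤ) - 1 = i₀ - 1 by omega] at hi
    by_contra hcon
    push_neg at hcon
    have : i ∈ hF.toFinset.filter (fun j => j ≤ 0) := by
      simp only [Finset.mem_filter, Set.Finite.mem_toFinset, mem_setOf_eq]
      exact ⟨hcon, by omega⟩
    exact absurd (Finset.min'_le _ i this) (by omega)

lemma exists_LEm {y : ℤ → V} (hT : T y) (h0 : 1 < ‖y 0‖) : ∃ m : ℕ, y ∈ LEm m := by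
  have hF : {j : ℤ | 1 < ‖y j‖}.Finite := finite_exceed_one hT
  have h0mem : (0:ℤ) ∈ hF.toFinset := by simp [h0]
  have hne : hF.toFinset.Nonempty := ⟨0, h0mem⟩
  set j₁ : ℤ := hF.toFinset.max' hne with hj₁
  have hj₁mem := hF.toFinset.max'_mem hne
  simp only [Set.Finite.mem_toFinset, mem_setOf_eq] at hj₁mem
  have hj₁0 : 0 ≤ j₁ := Finset.le_max' _ 0 h0mem
  refine ⟨j₁.toNat, ?_, ?_⟩
  · rw [show (j₁.toNat : ℤ) = j₁ by omega]
    exact hj₁mem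
  · intro i hi
    rw [show (j₁.toNat : ℤ) + 1 = j₁ + 1 by omega] at hi
    by_contra hcon
    push_neg at hcon
    have : i ∈ hF.toFinset := by simpa using hcon
    exact absurd (Finset.le_max' _ i this) (by omega)

lemma measurableSet_Em [MeasurableSpace V] [BorelSpace V] (m : ℕ) :
    MeasurableSet (Em (V := V) m) := by
  have hrw : Em (V := V) m = {y : ℤ → V | 1 < ‖y (-(m:ℤ))‖}
      ∩ ⋂ (i : ℤ), ⋂ (_ : i ≤ -(m : ℤ) - 1), {y : ℤ → V | ‖y i‖ ≤ 1} := by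
    ext y; simp [Em]
  rw [hrw]
  exact (measurableSet_lt measurable_const ((measurable_pi_apply _).norm)).inter
    (MeasurableSet.iInter fun i => MeasurableSet.iInter fun _ =>
      measurableSet_le ((measurable_pi_apply _).norm) measurable_const)

lemma measurableSet_LEm [MeasurableSpace V] [BorelSpace V] (m : ℕ) :
    MeasurableSet (LEm (V := V) m) := by
  have hrw : LEm (V := V) m = {y : ℤ → V | 1 < ‖y (m:ℤ)‖}
      ∩ ⋂ (i : ℤ), ⋂ (_ : (m : ℤ) + 1 ≤ i), {y : ℤ → V | ‖y i‖ ≤ 1} := by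
    ext y; simp [LEm]
  rw [hrw]
  exact (measurableSet_lt measurable_const ((measurable_pi_apply _).norm)).inter
    (MeasurableSet.iInter fun i => MeasurableSet.iInter fun _ =>
      measurableSet_le ((measurable_pi_apply _).norm) measurable_const)


end S14

namespace S14
set_option linter.unusedSectionVars false
variable {V : Type*} [NormedAddCommGroup V]

lemma backshift_comp (k l : ℤ) :
    (backshift (V := V) k) ∘ (backshift l) = backshift (k + l) := by
  funext x; exact backshift_backshift k l x

lemma map_backshift_int [MeasurableSpace V] (ν : Measure (ℤ → V))
    (hν : ν.map (backshift 1) = ν) (k : ℤ) : ν.map (backshift k) = ν := by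
  have hme : ∀ l : ℤ, Measurable (backshift (V := V) l) := measurable_backshift
  have key : ∀ (a b : ℤ), ν.map (backshift b) = ν → (ν.map (backshift b)).map (backshift a)
      = ν.map (backshift (a + b)) := by
    intro a b _
    rw [Measure.map_map (hme a) (hme b), backshift_comp]
  have h0 : ν.map (backshift (0:ℤ)) = ν := by
    have : (backshift (0:ℤ) : (ℤ → V) → (ℤ → V)) = id := funext backshift_zero
    rw [this, Measure.map_id]
  have hm1 : ν.map (backshift (-1:ℤ)) = ν := by
    conv_lhs => rw [← hν]
    rw [key (-1) 1 hν, show (-1 + 1 : ℤ) = 0 by ring, h0]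
  induction k using Int.induction_on with
  | zero => exact h0
  | succ n ih =>
    have := key 1 n ih
    rw [ih, hν] at this
    rw [show ((n:ℤ) + 1) = 1 + n by ring, ← this]
  | pred n ih =>
    have := key (-1) (-n) ih
    rw [ih, hm1] at this
    rw [show (-(n:ℤ) - 1) = -1 + -n by ring, ← this]

lemma lintegral_backshift [MeasurableSpace V] (ν : Measure (ℤ → V))
    (hν : ν.map (backshift 1) = ν) (k : ℤ) (F : (ℤ → V) → ℝ≥0∞) (hF : Measurable F) :
    ∫⁻ y, F (backshift k y) ∂ν = ∫⁻ y, F y ∂ν := by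
  conv_rhs => rw [← map_backshift_int ν hν k]
  rw [lintegral_map hF (measurable_backshift k)]

lemma H_backshift_int (H : (ℤ → V) → ℝ≥0∞) (hH : ∀ x, H (backshift 1 x) = H x) :
    ∀ (k : ℤ) (x : ℤ → V), H (backshift k x) = H x := by
  have hm1 : ∀ x : ℤ → V, H (backshift (-1) x) = H x := by
    intro x
    conv_rhs => rw [show x = backshift 0 x from (backshift_zero x).symm,
      show (0:ℤ) = 1 + -1 by ring, ← backshift_backshift 1 (-1) x, hH]
  intro k
  induction k using Int.induction_on with
  | zero => exact fun x => by rw [backshift_zero]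
  | succ n ih =>
    intro x
    rw [show ((n:ℤ) + 1) = 1 + n by ring, ← backshift_backshift 1 n x, hH, ih]
  | pred n ih =>
    intro x
    rw [show (-(n:ℤ) - 1) = -1 + -n by ring, ← backshift_backshift (-1) (-n) x, hm1, ih]


end S14

namespace S14
set_option linter.unusedSectionVars false

lemma mul_ind (a : ℝ≥0∞) (p : Prop) [Decidable p] : a * ind p = if p then a else 0 := by
  by_cases h : p
  · rw [ind_pos h, if_pos h, mul_one]
  · rw [ind_neg h, if_neg h, mul_zero]

variable {V : Type*} [NormedAddCommGroup V] [NormedSpace ℝ V] [FiniteDimensional ℝ V]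
  [MeasurableSpace V] [BorelSpace V]
  {Ω : Type*} [MeasurableSpace Ω] {P : Measure Ω} [IsProbabilityMeasure P]
  {α : ℝ} {ν : Measure (ℤ → V)} {Θ : Ω → ℤ → V}

lemma norm_smul_pos {r : ℝ} (hr : 0 < r) (v : V) : ‖r • v‖ = r * ‖v‖ := by
  rw [norm_smul, Real.norm_eq_abs, abs_of_pos hr]

/-- Master lemma 1: `ν(Φ·1{‖y_k‖>1}) = E[Φ(B^k Θ)]` for `0`-homogeneous `Φ`. -/
lemma master1 (hα : 0 < α) (hΘmeas : Measurable Θ)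
    (hpolar : ∀ Hf : (ℤ → V) → ℝ≥0∞, Measurable Hf →
      ∫⁻ y in {y : ℤ → V | y 0 ≠ 0}, Hf y ∂ν
        = ∫⁻ r in Ioi (0 : ℝ),
            (∫⁻ ω, Hf (r • Θ ω) ∂P) * ENNReal.ofReal (α * r ^ (-α - 1)))
    (hνshift : ν.map (backshift 1) = ν)
    (haeΘ : ∀ᵐ ω ∂P, ‖Θ ω 0‖ = 1)
    (k : ℤ) (Φ : (ℤ → V) → ℝ≥0∞) (hΦm : Measurable Φ)
    (hΦhom : ∀ r : ℝ, 0 < r → ∀ y, Φ (r • y) = Φ y) :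
    ∫⁻ y, Φ y * ind (1 < ‖y k‖) ∂ν = ∫⁻ ω, Φ (backshift k (Θ ω)) ∂P := by
  classical
  have hm0 : MeasurableSet {y : ℤ → V | 1 < ‖y 0‖} :=
    measurableSet_lt measurable_const (measurable_pi_apply 0).norm
  have hG : Measurable fun y : ℤ → V => Φ (backshift k y) * ind (1 < ‖y 0‖) :=
    (hΦm.comp (measurable_backshift k)).mul (measurable_ind hm0)
  have hne : MeasurableSet {y : ℤ → V | y 0 ≠ 0} :=
    ((measurableSet_singleton (0:V)).preimage (measurable_pi_apply 0)).compl
  -- shift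
  have step1 : ∫⁻ y, Φ y * ind (1 < ‖y k‖) ∂ν
      = ∫⁻ y, Φ (backshift k y) * ind (1 < ‖y 0‖) ∂ν := by
    rw [← lintegral_backshift ν hνshift k (fun y => Φ y * ind (1 < ‖y k‖))
      (hΦm.mul (measurable_ind (measurableSet_lt measurable_const (measurable_pi_apply k).norm)))]
    refine lintegral_congr fun y => ?_
    congr 2
    rw [backshift_apply, sub_self]
  -- to polar
  have step2 : ∫⁻ y, Φ (backshift k y) * ind (1 < ‖y 0‖) ∂ν
      = ∫⁻ y in {y : ℤ → V | y 0 ≠ 0}, Φ (backshift k y) * ind (1 < ‖y 0‖) ∂ν := by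
    rw [← lintegral_indicator hne]
    refine lintegral_congr fun y => ?_
    by_cases h : y 0 = 0
    · have : ¬ (1 < ‖y 0‖) := by rw [h]; simp
      rw [ind_neg this, mul_zero, Set.indicator_of_notMem (by simp [h])]
    · rw [Set.indicator_of_mem (by simpa using h)]
  rw [step1, step2, hpolar _ hG]
  -- evaluate the radial integral
  have hC : ∀ r ∈ Ioi (0:ℝ),
      (∫⁻ ω, Φ (backshift k (r • Θ ω)) * ind (1 < ‖(r • Θ ω) 0‖) ∂P)
        * ENNReal.ofReal (α * r ^ (-α - 1))
      = (if 1 < r * 1 then (∫⁻ ω, Φ (backshift k (Θ ω)) ∂P) else 0)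
        * ENNReal.ofReal (α * r ^ (-α - 1)) := by
    intro r hr
    rw [mem_Ioi] at hr
    congr 1
    have hinner : ∫⁻ ω, Φ (backshift k (r • Θ ω)) * ind (1 < ‖(r • Θ ω) 0‖) ∂P
        = ∫⁻ ω, Φ (backshift k (Θ ω)) * ind (1 < r * 1) ∂P := by
      refine lintegral_congr_ae (haeΘ.mono fun ω hω => ?_)
      simp only []
      rw [backshift_smul, hΦhom r hr, Pi.smul_apply, norm_smul_pos hr, hω]
    rw [hinner]
    by_cases h : 1 < r * 1
    · rw [if_pos h]
      exact lintegral_congr fun ω => by rw [ind_pos h, mul_one]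
    · rw [if_neg h]
      rw [← lintegral_zero (μ := P)]
      exact lintegral_congr fun ω => by rw [ind_neg h, mul_zero]
  rw [setLIntegral_congr_fun measurableSet_Ioi hC,
    lint_scale hα _ (by norm_num : (0:ℝ) ≤ 1)]
  rw [Real.one_rpow, ENNReal.ofReal_one, mul_one]

/-- Master lemma 2: `ν(Φ·1{‖y_k‖>1}) = E[Φ(Θ)‖Θ_k‖^α]` for `0`-homogeneous `Φ`
vanishing on `{y_0 = 0}`. -/
lemma master2 (hα : 0 < α) (hΘmeas : Measurable Θ)
    (hpolar : ∀ Hf : (ℤ → V) → ℝ≥0∞, Measurable Hf →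
      ∫⁻ y in {y : ℤ → V | y 0 ≠ 0}, Hf y ∂ν
        = ∫⁻ r in Ioi (0 : ℝ),
            (∫⁻ ω, Hf (r • Θ ω) ∂P) * ENNReal.ofReal (α * r ^ (-α - 1)))
    (k : ℤ) (Φ : (ℤ → V) → ℝ≥0∞) (hΦm : Measurable Φ)
    (hΦhom : ∀ r : ℝ, 0 < r → ∀ y, Φ (r • y) = Φ y)
    (hΦz : ∀ y : ℤ → V, y 0 = 0 → Φ y = 0) :
    ∫⁻ y, Φ y * ind (1 < ‖y k‖) ∂ν = ∫⁻ ω, Φ (Θ ω) * (‖Θ ω k‖₊ : ℝ≥0∞) ^ α ∂P := by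
  classical
  have hmk : MeasurableSet {y : ℤ → V | 1 < ‖y k‖} :=
    measurableSet_lt measurable_const (measurable_pi_apply k).norm
  have hne : MeasurableSet {y : ℤ → V | y 0 ≠ 0} :=
    ((measurableSet_singleton (0:V)).preimage (measurable_pi_apply 0)).compl
  have hG : Measurable fun y : ℤ → V => Φ y * ind (1 < ‖y k‖) := hΦm.mul (measurable_ind hmk)
  have step2 : ∫⁻ y, Φ y * ind (1 < ‖y k‖) ∂ν
      = ∫⁻ y in {y : ℤ → V | y 0 ≠ 0}, Φ y * ind (1 < ‖y k‖) ∂ν := by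
    rw [← lintegral_indicator hne]
    refine lintegral_congr fun y => ?_
    by_cases h : y 0 = 0
    · rw [hΦz y h, zero_mul, Set.indicator_of_notMem (by simp [h])]
    · rw [Set.indicator_of_mem (by simpa using h)]
  rw [step2, hpolar _ hG]
  -- rewrite the integrand on `Ioi 0`
  have hstep3 : ∀ r ∈ Ioi (0:ℝ),
      (∫⁻ ω, Φ (r • Θ ω) * ind (1 < ‖(r • Θ ω) k‖) ∂P) * ENNReal.ofReal (α * r ^ (-α - 1))
      = ∫⁻ ω, Φ (Θ ω) * ind (1 < r * ‖Θ ω k‖) * ENNReal.ofReal (α * r ^ (-α - 1)) ∂P := by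
    intro r hr
    rw [mem_Ioi] at hr
    have hsm : Measurable fun ω => r • Θ ω :=
      measurable_pi_lambda _ fun j => ((measurable_pi_apply j).comp hΘmeas).const_smul r
    have hmc := lintegral_mul_const (μ := P) (ENNReal.ofReal (α * r ^ (-α - 1)))
      (f := fun ω => Φ (r • Θ ω) * ind (1 < ‖(r • Θ ω) k‖))
      ((hΦm.comp hsm).mul (measurable_ind
        (measurableSet_lt measurable_const (((measurable_pi_apply k).comp hsm).norm))))
    rw [← hmc]
    refine lintegral_congr fun ω => ?_
    rw [hΦhom r hr, Pi.smul_apply, norm_smul_pos hr]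
  rw [setLIntegral_congr_fun measurableSet_Ioi hstep3]
  -- swap the integrals
  have hjoint : Measurable (Function.uncurry fun (r : ℝ) (ω : Ω) =>
      Φ (Θ ω) * ind (1 < r * ‖Θ ω k‖) * ENNReal.ofReal (α * r ^ (-α - 1))) := by
    have h1 : Measurable fun p : ℝ × Ω => Φ (Θ p.2) := hΦm.comp (hΘmeas.comp measurable_snd)
    have h2 : Measurable fun p : ℝ × Ω => ind (1 < p.1 * ‖Θ p.2 k‖) := by
      refine measurable_ind (measurableSet_lt measurable_const ?_)
      exact measurable_fst.mul (((measurable_pi_apply k).comp (hΘmeas.comp measurable_snd)).norm)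
    have h3 : Measurable fun p : ℝ × Ω => ENNReal.ofReal (α * p.1 ^ (-α - 1)) :=
      ENNReal.measurable_ofReal.comp ((by measurability : Measurable fun p : ℝ × Ω => p.1 ^ (-α - 1)).const_mul α)
    exact (h1.mul h2).mul h3
  rw [lintegral_lintegral_swap hjoint.aemeasurable]
  -- evaluate the inner integral
  refine lintegral_congr fun ω => ?_
  have hin : ∀ r : ℝ, Φ (Θ ω) * ind (1 < r * ‖Θ ω k‖) * ENNReal.ofReal (α * r ^ (-α - 1))
      = (if 1 < r * ‖Θ ω k‖ then Φ (Θ ω) else 0) * ENNReal.ofReal (α * r ^ (-α - 1)) := by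
    intro r
    rw [mul_ind]
  simp_rw [hin]
  rw [lint_scale hα _ (norm_nonneg _)]
  congr 1
  rw [← enorm_eq_nnnorm, ← ofReal_norm, ← ENNReal.ofReal_rpow_of_nonneg (norm_nonneg _) hα.le]


end S14

namespace S14
set_option linter.unusedSectionVars false

variable {V : Type*} [NormedAddCommGroup V] [NormedSpace ℝ V] [FiniteDimensional ℝ V]
  [MeasurableSpace V] [BorelSpace V]
  {Ω : Type*} [MeasurableSpace Ω] {P : Measure Ω} [IsProbabilityMeasure P]
  {α : ℝ} {Θ : Ω → ℤ → V}

lemma measurable_SS (α : ℝ) : Measurable fun y : ℤ → V => SS α y :=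
  Measurable.ennreal_tsum fun j => ((measurable_pi_apply j).nnnorm.coe_nnreal_ennreal).pow_const α

lemma SS_def (α : ℝ) (y : ℤ → V) : (∑' j : ℤ, (‖y j‖₊ : ℝ≥0∞) ^ α) = SS α y := rfl

lemma measurable_scale (k : ℤ) : Measurable (fun y : ℤ → V => ‖y k‖⁻¹ • y) :=
  measurable_pi_lambda _ fun j =>
    ((measurable_pi_apply k).norm.inv).smul (measurable_pi_apply j)

lemma enn_nnnorm_eq_one {v : V} (h : ‖v‖ = 1) : (‖v‖₊ : ℝ≥0∞) = 1 := by
  rw [← enorm_eq_nnnorm, ← ofReal_norm, h, ENNReal.ofReal_one]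

lemma scale_smul (c : ℝ) {r : ℝ} (hr : r ≠ 0) (y : ℤ → V) :
    (r * c)⁻¹ • (r • y) = c⁻¹ • y := by
  have h : (r * c)⁻¹ * r = c⁻¹ := by
    rw [mul_inv, mul_comm r⁻¹ c⁻¹, mul_assoc, inv_mul_cancel₀ hr, mul_one]
  rw [smul_smul, h]

/-- the deterministic functional used in the time change argument. -/
def Phik (H : (ℤ → V) → ℝ≥0∞) (α : ℝ) (k : ℤ) (y : ℤ → V) : ℝ≥0∞ :=
  H (‖y k‖⁻¹ • y) * (‖y k‖₊ : ℝ≥0∞) ^ α / SS α y * ind (InfargmaxAt y 0)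

lemma Phik_meas {H : (ℤ → V) → ℝ≥0∞} (hH : Measurable H) (α : ℝ) (k : ℤ) :
    Measurable (Phik H α k) :=
  (((hH.comp (measurable_scale k)).mul
    (((measurable_pi_apply k).nnnorm.coe_nnreal_ennreal).pow_const α)).div (measurable_SS α)).mul
    (measurable_ind (measurableSet_infargmaxAt 0))

lemma Phik_zero (H : (ℤ → V) → ℝ≥0∞) (α : ℝ) (k : ℤ) (y : ℤ → V) (h : y 0 = 0) :
    Phik H α k y = 0 := by
  unfold Phik
  rw [ind_neg, mul_zero]
  intro hI
  have := infargmaxAt_pos hI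
  simp [h] at this

lemma Phik_hom {H : (ℤ → V) → ℝ≥0∞} (hα : 0 < α) (k : ℤ)
    {r : ℝ} (hr : 0 < r) (y : ℤ → V) : Phik H α k (r • y) = Phik H α k y := by
  unfold Phik
  have h1 : ((r • y) : ℤ → V) k = r • (y k) := rfl
  have h2 : ‖(r • y) k‖⁻¹ • (r • y) = ‖y k‖⁻¹ • y := by
    rw [h1, norm_smul_pos hr, scale_smul _ hr.ne']
  have h3 : ((‖(r • y) k‖₊ : ℝ≥0∞)) ^ α = ENNReal.ofReal r ^ α * (‖y k‖₊ : ℝ≥0∞) ^ α := by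
    rw [h1, nnnorm_smul_pos hr, ENNReal.mul_rpow_of_nonneg _ _ hα.le]
  have hq0 : ENNReal.ofReal r ^ α ≠ 0 := by
    refine (ENNReal.rpow_pos (by simp [hr]) ENNReal.ofReal_ne_top).ne'
  have hqt : ENNReal.ofReal r ^ α ≠ ∞ :=
    ENNReal.rpow_ne_top_of_nonneg hα.le ENNReal.ofReal_ne_top
  rw [h2, h3, SS_smul hα hr, ind_congr (infargmaxAt_smul hr y 0)]
  congr 1
  rw [mul_comm (ENNReal.ofReal r ^ α) ((‖y k‖₊ : ℝ≥0∞) ^ α), ← mul_assoc]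
  rw [show H (‖y k‖⁻¹ • y) * ((‖y k‖₊ : ℝ≥0∞) ^ α) * ENNReal.ofReal r ^ α
      = ENNReal.ofReal r ^ α * (H (‖y k‖⁻¹ • y) * (‖y k‖₊ : ℝ≥0∞) ^ α) by ring]
  exact ENNReal.mul_div_mul_left _ _ hq0 hqt

lemma Phik_mul_rpow {H : (ℤ → V) → ℝ≥0∞} (hα : 0 < α)
    (hHhom : ∀ t : ℝ, 0 < t → ∀ x, H (t • x) = ENNReal.ofReal (t ^ α) * H x)
    (k : ℤ) (y : ℤ → V) :
    Phik H α k y * (‖y k‖₊ : ℝ≥0∞) ^ α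
      = H y * (SS α y)⁻¹ * ind (InfargmaxAt y 0) * (‖y k‖₊ : ℝ≥0∞) ^ α := by
  unfold Phik
  rcases eq_or_ne (y k) 0 with h0 | h0
  · rw [h0]
    simp [ENNReal.zero_rpow_of_pos hα]
  · have hc : 0 < ‖y k‖ := norm_pos_iff.mpr h0
    have key : ENNReal.ofReal ((‖y k‖⁻¹) ^ α) * (‖y k‖₊ : ℝ≥0∞) ^ α = 1 := by
      rw [← enorm_eq_nnnorm, ← ofReal_norm, ENNReal.ofReal_rpow_of_pos hc,
        ← ENNReal.ofReal_mul (by positivity), ← Real.mul_rpow (by positivity) hc.le,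
        inv_mul_cancel₀ hc.ne', Real.one_rpow, ENNReal.ofReal_one]
    rw [hHhom (‖y k‖⁻¹) (by positivity) y, div_eq_mul_inv]
    calc ENNReal.ofReal (‖y k‖⁻¹ ^ α) * H y * (‖y k‖₊ : ℝ≥0∞) ^ α * (SS α y)⁻¹
          * ind (InfargmaxAt y 0) * (‖y k‖₊ : ℝ≥0∞) ^ α
        = (ENNReal.ofReal (‖y k‖⁻¹ ^ α) * (‖y k‖₊ : ℝ≥0∞) ^ α)
          * (H y * (SS α y)⁻¹ * ind (InfargmaxAt y 0) * (‖y k‖₊ : ℝ≥0∞) ^ α) := by ring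
      _ = H y * (SS α y)⁻¹ * ind (InfargmaxAt y 0) * (‖y k‖₊ : ℝ≥0∞) ^ α := by
          rw [key, one_mul]

/-- conjunct 2, assuming the time change formula. -/
lemma conj2_of_TCF (hα : 0 < α) (hΘmeas : Measurable Θ)
    {H : (ℤ → V) → ℝ≥0∞} (hH : Measurable H)
    (hHsh : ∀ (k : ℤ) (x : ℤ → V), H (backshift k x) = H x)
    (hHhom : ∀ t : ℝ, 0 < t → ∀ x, H (t • x) = ENNReal.ofReal (t ^ α) * H x)
    (haeΘnorm : ∀ᵐ ω ∂P, ‖Θ ω 0‖ = 1)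
    (haeEU : ∀ᵐ ω ∂P, ∃! j, InfargmaxAt (Θ ω) j)
    (hTCF : ∀ (k : ℤ) (Φ : (ℤ → V) → ℝ≥0∞), Measurable Φ →
      (∀ r : ℝ, 0 < r → ∀ y, Φ (r • y) = Φ y) → (∀ y : ℤ → V, y 0 = 0 → Φ y = 0) →
      ∫⁻ ω, Φ (backshift k (Θ ω)) ∂P = ∫⁻ ω, Φ (Θ ω) * (‖Θ ω k‖₊ : ℝ≥0∞) ^ α ∂P) :
    ∫⁻ ω in {ω | InfargmaxAt (Θ ω) 0}, H (Θ ω) ∂P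
      = ∫⁻ ω, H (Θ ω) / SS α (Θ ω) ∂P := by
  classical
  have hIATmeas : ∀ j : ℤ, MeasurableSet {ω | InfargmaxAt (Θ ω) j} :=
    fun j => (measurableSet_infargmaxAt j).preimage hΘmeas
  -- unit functional and the `S < ∞` fact
  have hTCFu := hTCF
  set Φu : (ℤ → V) → ℝ≥0∞ := fun y => ind (InfargmaxAt y 0) with hΦu
  have hΦum : Measurable Φu := measurable_ind (measurableSet_infargmaxAt 0)
  have hΦuhom : ∀ r : ℝ, 0 < r → ∀ y, Φu (r • y) = Φu y := fun r hr y =>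
    ind_congr (infargmaxAt_smul hr y 0)
  have hΦuz : ∀ y : ℤ → V, y 0 = 0 → Φu y = 0 := fun y h => by
    refine ind_neg fun hI => ?_
    have := infargmaxAt_pos hI
    simp [h] at this
  -- a.e. sum of shifted infargmax indicators is 1
  have haesum : ∀ᵐ ω ∂P, ∑' k : ℤ, ind (InfargmaxAt (Θ ω) (-k)) = 1 := by
    refine haeEU.mono fun ω ⟨j, hj, hun⟩ => ?_
    rw [tsum_eq_single (-j) ?_]
    · rw [neg_neg]; exact ind_pos hj
    · intro k hk
      refine ind_neg fun hI => hk ?_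
      have := hun (-k) hI
      omega
  have hshift_ind : ∀ (k : ℤ) (ω : Ω), Φu (backshift k (Θ ω)) = ind (InfargmaxAt (Θ ω) (-k)) := by
    intro k ω
    exact ind_congr (by rw [infargmaxAt_backshift, zero_sub])
  -- step: `∫ ind(I(Θ)=0)·S = 1`
  have hunit : ∫⁻ ω, ind (InfargmaxAt (Θ ω) 0) * SS α (Θ ω) ∂P = 1 := by
    have h1 : ∀ k : ℤ, ∫⁻ ω, ind (InfargmaxAt (Θ ω) (-k)) ∂P
        = ∫⁻ ω, ind (InfargmaxAt (Θ ω) 0) * (‖Θ ω k‖₊ : ℝ≥0∞) ^ α ∂P := by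
      intro k
      rw [← hTCF k Φu hΦum hΦuhom hΦuz]
      exact lintegral_congr fun ω => (hshift_ind k ω).symm
    calc ∫⁻ ω, ind (InfargmaxAt (Θ ω) 0) * SS α (Θ ω) ∂P
        = ∫⁻ ω, ∑' k : ℤ, ind (InfargmaxAt (Θ ω) 0) * (‖Θ ω k‖₊ : ℝ≥0∞) ^ α ∂P := by
          refine lintegral_congr fun ω => ?_
          rw [ENNReal.tsum_mul_left]
          rfl
      _ = ∑' k : ℤ, ∫⁻ ω, ind (InfargmaxAt (Θ ω) 0) * (‖Θ ω k‖₊ : ℝ≥0∞) ^ α ∂P := by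
          refine lintegral_tsum fun k => ?_
          exact ((measurable_ind (hIATmeas 0)).mul
            ((((measurable_pi_apply k).comp hΘmeas).nnnorm.coe_nnreal_ennreal).pow_const α)).aemeasurable
      _ = ∑' k : ℤ, ∫⁻ ω, ind (InfargmaxAt (Θ ω) (-k)) ∂P := by
          exact tsum_congr fun k => (h1 k).symm
      _ = ∫⁻ ω, ∑' k : ℤ, ind (InfargmaxAt (Θ ω) (-k)) ∂P := by
          refine (lintegral_tsum fun k => ?_).symm
          exact (measurable_ind (hIATmeas (-k))).aemeasurable
      _ = ∫⁻ ω, 1 ∂P := lintegral_congr_ae haesum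
      _ = 1 := by simp
  have haeSSfin : ∀ᵐ ω ∂P, InfargmaxAt (Θ ω) 0 → SS α (Θ ω) ≠ ∞ := by
    have hmeas : Measurable fun ω => ind (InfargmaxAt (Θ ω) 0) * SS α (Θ ω) :=
      (measurable_ind (hIATmeas 0)).mul ((measurable_SS α).comp hΘmeas)
    have := ae_lt_top hmeas (by rw [hunit]; exact ENNReal.one_ne_top)
    refine this.mono fun ω hω hI => ?_
    rw [ind_pos hI, one_mul] at hω
    exact hω.ne
  have haeSSne : ∀ᵐ ω ∂P, SS α (Θ ω) ≠ 0 := by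
    refine haeΘnorm.mono fun ω hω => ?_
    have h1 : (1:ℝ≥0∞) ≤ SS α (Θ ω) := by
      have := ENNReal.le_tsum (f := fun j : ℤ => (‖Θ ω j‖₊ : ℝ≥0∞) ^ α) 0
      rwa [enn_nnnorm_eq_one hω, ENNReal.one_rpow] at this
    exact fun h0 => by rw [h0] at h1; exact (not_le.mpr zero_lt_one) h1
  -- the per-k identity
  have hB : ∀ k : ℤ, ∫⁻ ω, (H (Θ ω) / SS α (Θ ω)) * ind (InfargmaxAt (Θ ω) (-k)) ∂P
      = ∫⁻ ω, (H (Θ ω) * (SS α (Θ ω))⁻¹ * ind (InfargmaxAt (Θ ω) 0))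
          * (‖Θ ω k‖₊ : ℝ≥0∞) ^ α ∂P := by
    intro k
    have hmain := hTCF k (Phik H α k) (Phik_meas hH α k) (fun r hr y => Phik_hom hα k hr y)
      (Phik_zero H α k)
    have hL : ∫⁻ ω, Phik H α k (backshift k (Θ ω)) ∂P
        = ∫⁻ ω, (H (Θ ω) / SS α (Θ ω)) * ind (InfargmaxAt (Θ ω) (-k)) ∂P := by
      refine lintegral_congr_ae (haeΘnorm.mono fun ω hω => ?_)
      simp only []
      unfold Phik
      have e1 : (backshift k (Θ ω)) k = Θ ω 0 := by rw [backshift_apply, sub_self]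
      rw [e1, hω, inv_one, one_smul, H_backshift_int H (fun x => hHsh 1 x) k,
        enn_nnnorm_eq_one hω, ENNReal.one_rpow, mul_one, SS_backshift,
        ind_congr (by rw [infargmaxAt_backshift, zero_sub] : InfargmaxAt (backshift k (Θ ω)) 0
          ↔ InfargmaxAt (Θ ω) (-k))]
    have hR : ∫⁻ ω, Phik H α k (Θ ω) * (‖Θ ω k‖₊ : ℝ≥0∞) ^ α ∂P
        = ∫⁻ ω, (H (Θ ω) * (SS α (Θ ω))⁻¹ * ind (InfargmaxAt (Θ ω) 0))
          * (‖Θ ω k‖₊ : ℝ≥0∞) ^ α ∂P :=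
      lintegral_congr fun ω => Phik_mul_rpow hα hHhom k (Θ ω)
    rw [← hL, hmain, hR]
  -- assemble
  have hfinal : ∫⁻ ω, H (Θ ω) / SS α (Θ ω) ∂P
      = ∫⁻ ω, H (Θ ω) * ind (InfargmaxAt (Θ ω) 0) ∂P := by
    calc ∫⁻ ω, H (Θ ω) / SS α (Θ ω) ∂P
        = ∫⁻ ω, ∑' k : ℤ, (H (Θ ω) / SS α (Θ ω)) * ind (InfargmaxAt (Θ ω) (-k)) ∂P := by
          refine lintegral_congr_ae (haesum.mono fun ω hω => ?_)
          simp only []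
          rw [ENNReal.tsum_mul_left, hω, mul_one]
      _ = ∑' k : ℤ, ∫⁻ ω, (H (Θ ω) / SS α (Θ ω)) * ind (InfargmaxAt (Θ ω) (-k)) ∂P := by
          refine lintegral_tsum fun k => ?_
          exact (((hH.comp hΘmeas).div ((measurable_SS α).comp hΘmeas)).mul
            (measurable_ind (hIATmeas (-k)))).aemeasurable
      _ = ∑' k : ℤ, ∫⁻ ω, (H (Θ ω) * (SS α (Θ ω))⁻¹ * ind (InfargmaxAt (Θ ω) 0))
            * (‖Θ ω k‖₊ : ℝ≥0∞) ^ α ∂P := tsum_congr fun k => hB k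
      _ = ∫⁻ ω, ∑' k : ℤ, (H (Θ ω) * (SS α (Θ ω))⁻¹ * ind (InfargmaxAt (Θ ω) 0))
            * (‖Θ ω k‖₊ : ℝ≥0∞) ^ α ∂P := by
          refine (lintegral_tsum fun k => ?_).symm
          exact (((hH.comp hΘmeas).mul (((measurable_SS α).comp hΘmeas).inv)).mul
            (measurable_ind (hIATmeas 0))).mul
            ((((measurable_pi_apply k).comp hΘmeas).nnnorm.coe_nnreal_ennreal).pow_const α) |>.aemeasurable
      _ = ∫⁻ ω, H (Θ ω) * ind (InfargmaxAt (Θ ω) 0) ∂P := by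
          refine lintegral_congr_ae ((haeSSfin.and haeSSne).mono fun ω ⟨hfin, hne⟩ => ?_)
          simp only []
          rw [ENNReal.tsum_mul_left, SS_def]
          by_cases hI : InfargmaxAt (Θ ω) 0
          · rw [ind_pos hI, mul_one, mul_one,
              show H (Θ ω) * (SS α (Θ ω))⁻¹ * SS α (Θ ω)
                = H (Θ ω) * ((SS α (Θ ω))⁻¹ * SS α (Θ ω)) by ring,
              ENNReal.inv_mul_cancel hne (hfin hI), mul_one]
          · rw [ind_neg hI, mul_zero, mul_zero, zero_mul]
  have h1 : ∫⁻ ω in {ω | InfargmaxAt (Θ ω) 0}, H (Θ ω) ∂P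
      = ∫⁻ ω, H (Θ ω) * ind (InfargmaxAt (Θ ω) 0) ∂P := by
    rw [← lintegral_mul_ind P (fun ω => H (Θ ω))
      (show MeasurableSet {ω | InfargmaxAt (Θ ω) 0} from
        (measurableSet_infargmaxAt 0).preimage hΘmeas)]
    rfl
  rw [h1, hfinal]


end S14

namespace S14
set_option linter.unusedSectionVars false

variable {V : Type*} [NormedAddCommGroup V] [NormedSpace ℝ V] [FiniteDimensional ℝ V]
  [MeasurableSpace V] [BorelSpace V]

lemma lintegral_ind {γ : Type*} [MeasurableSpace γ] (μ : Measure γ)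
    {S : Set γ} (hS : MeasurableSet S) : ∫⁻ a, ind (a ∈ S) ∂μ = μ S := by
  have := lintegral_mul_ind μ (fun _ => (1:ℝ≥0∞)) hS
  simpa using this

lemma measurable_rsup : Measurable (rsup (V := V)) :=
  Measurable.iSup fun j => (measurable_pi_apply j).norm

lemma measurable_rscale : Measurable (fun y : ℤ → V => (rsup y)⁻¹ • y) :=
  measurable_pi_lambda _ fun j => (measurable_rsup.inv).smul (measurable_pi_apply j)

lemma T_of_one_lt {y : ℤ → V} (hy : y 0 ≠ 0 → T y) (h : 1 < ‖y 0‖) : T y := by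
  refine hy fun hz => ?_
  rw [hz] at h; simp at h; linarith

lemma ne_zero_of_one_lt_norm {y : ℤ → V} (h : 1 < ‖y 0‖) : y ≠ 0 := by
  intro h0
  rw [h0] at h
  simp at h
  linarith

lemma one_lt_norm_zero_of_infargmax {y : ℤ → V} (hI : InfargmaxAt y 0)
    {i : ℤ} (hi : 1 < ‖y i‖) : 1 < ‖y 0‖ :=
  (one_lt_enn _).mp (lt_of_lt_of_le ((one_lt_enn _).mpr hi) (infargmaxAt_le hI i))

lemma measurableSet_Em_mem (k : ℕ) : MeasurableSet {y : ℤ → V | y ∈ Em k} :=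
  measurableSet_Em k

lemma measurableSet_LEm_mem (k : ℕ) : MeasurableSet {y : ℤ → V | y ∈ LEm k} :=
  measurableSet_LEm k

lemma measurableSet_A0 : MeasurableSet
    {y : ℤ → V | 1 < ‖y 0‖ ∧ ∀ j : ℤ, j ≤ -1 → ‖y j‖ ≤ 1} := by
  have h : {y : ℤ → V | 1 < ‖y 0‖ ∧ ∀ j : ℤ, j ≤ -1 → ‖y j‖ ≤ 1}
      = {y : ℤ → V | 1 < ‖y 0‖}
        ∩ ⋂ (j : ℤ), ⋂ (_ : j ≤ -1), {y : ℤ → V | ‖y j‖ ≤ 1} := by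
    ext y; simp [mem_iInter]
  rw [h]
  exact (measurableSet_lt measurable_const (measurable_pi_apply 0).norm).inter
    (MeasurableSet.iInter fun j => MeasurableSet.iInter fun _ =>
      measurableSet_le (measurable_pi_apply j).norm measurable_const)

lemma measurableSet_L0 : MeasurableSet
    {y : ℤ → V | 1 < ‖y 0‖ ∧ ∀ j : ℤ, 1 ≤ j → ‖y j‖ ≤ 1} := by
  have h : {y : ℤ → V | 1 < ‖y 0‖ ∧ ∀ j : ℤ, 1 ≤ j → ‖y j‖ ≤ 1}
      = {y : ℤ → V | 1 < ‖y 0‖}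
        ∩ ⋂ (j : ℤ), ⋂ (_ : 1 ≤ j), {y : ℤ → V | ‖y j‖ ≤ 1} := by
    ext y; simp [mem_iInter]
  rw [h]
  exact (measurableSet_lt measurable_const (measurable_pi_apply 0).norm).inter
    (MeasurableSet.iInter fun j => MeasurableSet.iInter fun _ =>
      measurableSet_le (measurable_pi_apply j).norm measurable_const)

/-- the first-exceedance reassembly: for `Ψ` supported on `{I(y)=0}`,
`∫ Ψ 1{y ∈ Em k}` sums to `∫ Ψ 1{‖y_0‖>1}`. -/
lemma sum_Em (ν : Measure (ℤ → V)) (hνaeT : ∀ᵐ y ∂ν, y 0 ≠ 0 → T y)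
    (Ψ : (ℤ → V) → ℝ≥0∞) (hΨm : Measurable Ψ)
    (hΨsupp : ∀ y, (∃ k : ℕ, y ∈ Em k) → ¬ (1 < ‖y 0‖) → Ψ y = 0) :
    ∑' k : ℕ, ∫⁻ y, Ψ y * ind (y ∈ Em k) ∂ν = ∫⁻ y, Ψ y * ind (1 < ‖y 0‖) ∂ν := by
  classical
  rw [← lintegral_tsum (f := fun (k : ℕ) (y : ℤ → V) => Ψ y * ind (y ∈ Em k))
    (fun k => (hΨm.mul (measurable_ind (measurableSet_Em_mem k))).aemeasurable)]
  refine lintegral_congr_ae (hνaeT.mono fun y hy => ?_)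
  try simp only []
  rw [ENNReal.tsum_mul_left]
  by_cases h0 : 1 < ‖y 0‖
  · obtain ⟨m, hm⟩ := exists_Em (T_of_one_lt hy h0) h0
    rw [ind_pos h0, tsum_eq_single m ?_, ind_pos hm]
    intro l hl
    exact ind_neg fun hmem => hl (Em_unique hmem hm)
  · rw [ind_neg h0, mul_zero]
    by_cases hex : ∃ k : ℕ, y ∈ Em k
    · rw [hΨsupp y hex h0, zero_mul]
    · push_neg at hex
      have hz : ∀ k : ℕ, ind (y ∈ Em k) = 0 := fun k => ind_neg (hex k)
      simp only [hz, tsum_zero, mul_zero]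

/-- decomposition over the position of the infargmax. -/
lemma decompose_IAt (ν : Measure (ℤ → V)) (hνshift : ν.map (backshift 1) = ν)
    (hνaeT : ∀ᵐ y ∂ν, y 0 ≠ 0 → T y)
    (W : (ℤ → V) → ℝ≥0∞) (hWm : Measurable W)
    (hWsh : ∀ (k : ℤ) (y : ℤ → V), W (backshift k y) = W y) :
    ∫⁻ y, W y * ind (1 < ‖y 0‖ ∧ ∀ j : ℤ, j ≤ -1 → ‖y j‖ ≤ 1) ∂ν
      = ∫⁻ y, (W y * ind (InfargmaxAt y 0)) * ind (1 < ‖y 0‖) ∂ν := by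
  classical
  have hAmeas' : MeasurableSet {y : ℤ → V | 1 < ‖y 0‖ ∧ ∀ j : ℤ, j ≤ -1 → ‖y j‖ ≤ 1} :=
    measurableSet_A0
  set G : (ℤ → V) → ℝ≥0∞ :=
    fun y => W y * ind (1 < ‖y 0‖ ∧ ∀ j : ℤ, j ≤ -1 → ‖y j‖ ≤ 1) with hG
  have hGm : Measurable G := hWm.mul (measurable_ind hAmeas')
  -- step 1: a.e. decomposition over the infargmax position (a natural number)
  have hstep1 : ∫⁻ y, G y ∂ν = ∑' k : ℕ, ∫⁻ y, G y * ind (InfargmaxAt y (k : ℤ)) ∂ν := by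
    rw [← lintegral_tsum (f := fun (k : ℕ) (y : ℤ → V) => G y * ind (InfargmaxAt y (k : ℤ)))
      (fun k => (hGm.mul
      (measurable_ind (measurableSet_infargmaxAt (k:ℤ)))).aemeasurable)]
    refine lintegral_congr_ae (hνaeT.mono fun y hy => ?_)
    try simp only []
    rw [ENNReal.tsum_mul_left]
    by_cases hA : 1 < ‖y 0‖ ∧ ∀ j : ℤ, j ≤ -1 → ‖y j‖ ≤ 1
    · have hT : T y := T_of_one_lt hy hA.1
      obtain ⟨j, hj⟩ := hT.exists_infargmaxAt (ne_zero_of_one_lt_norm hA.1)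
      have hj0 : 0 ≤ j := by
        by_contra hneg
        have h1 : ‖y j‖ ≤ 1 := hA.2 j (by omega)
        have h4 : 1 < ‖y j‖ := (one_lt_enn _).mp (lt_of_lt_of_le ((one_lt_enn _).mpr hA.1)
          (infargmaxAt_le hj 0))
        linarith
      have hsum : (∑' k : ℕ, ind (InfargmaxAt y (k:ℤ))) = 1 := by
        rw [tsum_eq_single j.toNat ?_]
        · exact ind_pos (by rwa [Int.toNat_of_nonneg hj0])
        · intro k hk
          refine ind_neg fun hIk => hk ?_
          have := infargmaxAt_unique hIk hj
          omega
      rw [hsum, mul_one]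
    · have hGz : G y = 0 := by rw [hG]; try simp only []; rw [ind_neg hA, mul_zero]
      rw [hGz, zero_mul]
  -- step 2: shift the k-th piece
  have hstep2 : ∀ k : ℕ, ∫⁻ y, G y * ind (InfargmaxAt y (k : ℤ)) ∂ν
      = ∫⁻ z, (W z * ind (InfargmaxAt z 0)) * ind (z ∈ Em k) ∂ν := by
    intro k
    rw [← lintegral_backshift ν hνshift (k:ℤ) (fun y => G y * ind (InfargmaxAt y (k:ℤ)))
      (hGm.mul (measurable_ind (measurableSet_infargmaxAt (k:ℤ))))]
    refine lintegral_congr fun z => ?_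
    rw [hG]
    try simp only []
    have e1 : W (backshift (k:ℤ) z) = W z := hWsh _ _
    have e2 : ind (1 < ‖backshift (k:ℤ) z 0‖ ∧ ∀ j : ℤ, j ≤ -1 → ‖backshift (k:ℤ) z j‖ ≤ 1)
        = ind (z ∈ Em k) := by
      refine ind_congr ?_
      unfold Em
      simp only [backshift_apply, mem_setOf_eq, zero_sub]
      constructor
      · rintro ⟨h1, h2⟩
        refine ⟨h1, fun i hi => ?_⟩
        have := h2 (i + (k:ℤ)) (by omega)
        simpa using this
      · rintro ⟨h1, h2⟩
        exact ⟨h1, fun j hj => h2 (j - (k:ℤ)) (by omega)⟩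
    have e3 : ind (InfargmaxAt (backshift (k:ℤ) z) (k:ℤ)) = ind (InfargmaxAt z 0) := by
      refine ind_congr ?_
      rw [infargmaxAt_backshift, sub_self]
    rw [e1, e2, e3]
    ring
  rw [hstep1]
  rw [show (∑' k : ℕ, ∫⁻ y, G y * ind (InfargmaxAt y (k : ℤ)) ∂ν)
      = ∑' k : ℕ, ∫⁻ z, (W z * ind (InfargmaxAt z 0)) * ind (z ∈ Em k) ∂ν from
    tsum_congr fun k => hstep2 k]
  refine sum_Em ν hνaeT (fun z => W z * ind (InfargmaxAt z 0))
    (hWm.mul (measurable_ind (measurableSet_infargmaxAt 0))) ?_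
  rintro y ⟨k, hk⟩ h0
  have hni : ¬ InfargmaxAt y 0 := fun hI => h0 (one_lt_norm_zero_of_infargmax hI hk.1)
  try simp only []
  rw [ind_neg hni, mul_zero]

/-- `ν(first exceedance at 0) = ν(last exceedance at 0)`. -/
lemma theta_eq (ν : Measure (ℤ → V)) (hνshift : ν.map (backshift 1) = ν)
    (hνaeT : ∀ᵐ y ∂ν, y 0 ≠ 0 → T y) :
    ν {y : ℤ → V | 1 < ‖y 0‖ ∧ ∀ j : ℤ, j ≤ -1 → ‖y j‖ ≤ 1}
      = ν {y : ℤ → V | 1 < ‖y 0‖ ∧ ∀ j : ℤ, 1 ≤ j → ‖y j‖ ≤ 1} := by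
  classical
  rw [← lintegral_ind ν measurableSet_A0, ← lintegral_ind ν measurableSet_L0]
  have hstep1 : ∫⁻ y, ind (y ∈ {y : ℤ → V | 1 < ‖y 0‖ ∧ ∀ j : ℤ, j ≤ -1 → ‖y j‖ ≤ 1}) ∂ν
      = ∑' m : ℕ, ∫⁻ y,
          ind (y ∈ {y : ℤ → V | 1 < ‖y 0‖ ∧ ∀ j : ℤ, j ≤ -1 → ‖y j‖ ≤ 1})
            * ind (y ∈ LEm m) ∂ν := by
    rw [← lintegral_tsum (f := fun (m : ℕ) (y : ℤ → V) =>
        ind (y ∈ {y : ℤ → V | 1 < ‖y 0‖ ∧ ∀ j : ℤ, j ≤ -1 → ‖y j‖ ≤ 1}) * ind (y ∈ LEm m))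
      (fun m => ((measurable_ind (p := fun y : ℤ → V =>
          y ∈ {y : ℤ → V | 1 < ‖y 0‖ ∧ ∀ j : ℤ, j ≤ -1 → ‖y j‖ ≤ 1}) measurableSet_A0).mul
        (measurable_ind (measurableSet_LEm_mem m))).aemeasurable)]
    refine lintegral_congr_ae (hνaeT.mono fun y hy => ?_)
    try simp only []
    rw [ENNReal.tsum_mul_left]
    by_cases hA : y ∈ {y : ℤ → V | 1 < ‖y 0‖ ∧ ∀ j : ℤ, j ≤ -1 → ‖y j‖ ≤ 1}
    · obtain ⟨m, hm⟩ := exists_LEm (T_of_one_lt hy hA.1) hA.1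
      have hsum : (∑' m : ℕ, ind (y ∈ LEm m)) = 1 := by
        rw [tsum_eq_single m ?_]
        · exact ind_pos hm
        · exact fun l hl => ind_neg fun hmem => hl (LEm_unique hmem hm)
      rw [hsum, mul_one]
    · rw [ind_neg hA, zero_mul]
  have hstep2 : ∀ m : ℕ,
      ∫⁻ y, ind (y ∈ {y : ℤ → V | 1 < ‖y 0‖ ∧ ∀ j : ℤ, j ≤ -1 → ‖y j‖ ≤ 1})
          * ind (y ∈ LEm m) ∂ν
      = ∫⁻ z, ind (z ∈ {y : ℤ → V | 1 < ‖y 0‖ ∧ ∀ j : ℤ, 1 ≤ j → ‖y j‖ ≤ 1})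
          * ind (z ∈ Em m) ∂ν := by
    intro m
    rw [← lintegral_backshift ν hνshift (m:ℤ)
      (fun y => ind (y ∈ {y : ℤ → V | 1 < ‖y 0‖ ∧ ∀ j : ℤ, j ≤ -1 → ‖y j‖ ≤ 1})
        * ind (y ∈ LEm m))
      ((measurable_ind (p := fun y : ℤ → V =>
          y ∈ {y : ℤ → V | 1 < ‖y 0‖ ∧ ∀ j : ℤ, j ≤ -1 → ‖y j‖ ≤ 1}) measurableSet_A0).mul
        (measurable_ind (measurableSet_LEm_mem m)))]
    refine lintegral_congr fun z => ?_
    try simp only []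
    have e1 : ind (backshift (m:ℤ) z ∈ {y : ℤ → V | 1 < ‖y 0‖ ∧ ∀ j : ℤ, j ≤ -1 → ‖y j‖ ≤ 1})
        = ind (z ∈ Em m) := by
      refine ind_congr ?_
      unfold Em
      simp only [backshift_apply, mem_setOf_eq, zero_sub]
      constructor
      · rintro ⟨h1, h2⟩
        refine ⟨h1, fun i hi => ?_⟩
        have := h2 (i + (m:ℤ)) (by omega)
        simpa using this
      · rintro ⟨h1, h2⟩
        exact ⟨h1, fun j hj => h2 (j - (m:ℤ)) (by omega)⟩
    have e2 : ind (backshift (m:ℤ) z ∈ LEm m)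
        = ind (z ∈ {y : ℤ → V | 1 < ‖y 0‖ ∧ ∀ j : ℤ, 1 ≤ j → ‖y j‖ ≤ 1}) := by
      refine ind_congr ?_
      unfold LEm
      simp only [backshift_apply, mem_setOf_eq, sub_self]
      constructor
      · rintro ⟨h1, h2⟩
        refine ⟨h1, fun i hi => ?_⟩
        have := h2 (i + (m:ℤ)) (by omega)
        simpa using this
      · rintro ⟨h1, h2⟩
        exact ⟨h1, fun j hj => h2 (j - (m:ℤ)) (by omega)⟩
    rw [e1, e2]
    ring
  rw [hstep1, show (∑' m : ℕ, ∫⁻ y,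
      ind (y ∈ {y : ℤ → V | 1 < ‖y 0‖ ∧ ∀ j : ℤ, j ≤ -1 → ‖y j‖ ≤ 1})
        * ind (y ∈ LEm m) ∂ν)
    = ∑' m : ℕ, ∫⁻ z, ind (z ∈ {y : ℤ → V | 1 < ‖y 0‖ ∧ ∀ j : ℤ, 1 ≤ j → ‖y j‖ ≤ 1})
        * ind (z ∈ Em m) ∂ν from tsum_congr fun m => hstep2 m]
  have hsum := sum_Em ν hνaeT
    (fun z => ind (z ∈ {y : ℤ → V | 1 < ‖y 0‖ ∧ ∀ j : ℤ, 1 ≤ j → ‖y j‖ ≤ 1}))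
    (measurable_ind (p := fun z : ℤ → V =>
      z ∈ {y : ℤ → V | 1 < ‖y 0‖ ∧ ∀ j : ℤ, 1 ≤ j → ‖y j‖ ≤ 1}) measurableSet_L0)
    (fun y _ h0 => ind_neg (fun hmem => h0 hmem.1))
  rw [hsum]
  refine lintegral_congr fun z => ?_
  try simp only []
  by_cases hL : z ∈ {y : ℤ → V | 1 < ‖y 0‖ ∧ ∀ j : ℤ, 1 ≤ j → ‖y j‖ ≤ 1}
  · rw [ind_pos hL, ind_pos hL.1, one_mul]
  · rw [ind_neg hL, zero_mul]


end S14

open S14 in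
/-- **Identities for shift invariant α-homogeneous functionals.**
If `P(lim_{|j|→∞} ‖Y_j‖ = 0) = 1` and `H` is a nonnegative, shift invariant,
`α`-homogeneous measurable function on `E`, then
`ϑ·E[H(Q)] = E[H(Θ) 1{I(Θ)=0}] = E[H(Θ)/Σ_{j∈ℤ}‖Θ_j‖^α]`; in particular the three
expectations are simultaneously finite or infinite. -/
theorem statement14
    {V : Type*} [NormedAddCommGroup V] [NormedSpace ℝ V] [FiniteDimensional ℝ V]
    [Nontrivial V] [MeasurableSpace V] [BorelSpace V]
    (α : ℝ) (hα : 0 < α)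
    (ν : Measure (ℤ → V))
    (hν0 : ν {0} = 0)
    (hν1 : ν {y : ℤ → V | 1 < ‖y 0‖} = 1)
    (hνshift : ν.map (backshift 1) = ν)
    (hνhom : ∀ A : Set (ℤ → V), MeasurableSet A → ∀ c : ℝ, 0 < c →
      ν ((fun x => c • x) '' A) = ENNReal.ofReal (c ^ (-α)) * ν A)
    {Ω : Type*} [MeasurableSpace Ω] (P : Measure Ω) [IsProbabilityMeasure P]
    (Y : Ω → ℤ → V) (hYmeas : Measurable Y)
    (hYlaw : P.map Y = ν.restrict {y : ℤ → V | 1 < ‖y 0‖})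
    (Θ : Ω → ℤ → V) (hΘdef : ∀ ω, Θ ω = ‖Y ω 0‖⁻¹ • Y ω)
    (hPareto : ∀ u : ℝ, 1 ≤ u → P {ω | u < ‖Y ω 0‖} = ENNReal.ofReal (u ^ (-α)))
    (hindep : IndepFun (fun ω => ‖Y ω 0‖) Θ P)
    (hpolar : ∀ H : (ℤ → V) → ℝ≥0∞, Measurable H →
      ∫⁻ y in {y : ℤ → V | y 0 ≠ 0}, H y ∂ν
        = ∫⁻ r in Ioi (0 : ℝ),
            (∫⁻ ω, H (r • Θ ω) ∂P) * ENNReal.ofReal (α * r ^ (-α - 1)))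
    {Ω' : Type*} [MeasurableSpace Ω'] (P' : Measure Ω') [IsProbabilityMeasure P']
    (Q : Ω' → ℤ → V) (hQmeas : Measurable Q)
    (hQlaw : P'.map Q
      = (ProbabilityTheory.cond P {ω | ∀ j : ℤ, j ≤ -1 → ‖Y ω j‖ ≤ 1}).map
          (fun ω => (⨆ j : ℤ, ‖Y ω j‖)⁻¹ • Y ω))
    (hY0 : P {ω | Tendsto (fun k : ℤ => ‖Y ω k‖) cofinite (𝓝 0)} = 1)
    (H : (ℤ → V) → ℝ≥0∞) (hH : Measurable H)
    (hHshift : ∀ x, H (backshift 1 x) = H x)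
    (hHhom : ∀ t : ℝ, 0 < t → ∀ x, H (t • x) = ENNReal.ofReal (t ^ α) * H x) :
    (P {ω | ∀ j : ℤ, 1 ≤ j → ‖Y ω j‖ ≤ 1} * ∫⁻ ω', H (Q ω') ∂P'
        = ∫⁻ ω in {ω | InfargmaxAt (Θ ω) 0}, H (Θ ω) ∂P) ∧
      (∫⁻ ω in {ω | InfargmaxAt (Θ ω) 0}, H (Θ ω) ∂P
        = ∫⁻ ω, H (Θ ω) / (∑' j : ℤ, (‖Θ ω j‖₊ : ℝ≥0∞) ^ α) ∂P) ∧
      ((∫⁻ ω', H (Q ω') ∂P' ≠ ∞) ↔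
        ∫⁻ ω in {ω | InfargmaxAt (Θ ω) 0}, H (Θ ω) ∂P ≠ ∞) ∧
      ((∫⁻ ω in {ω | InfargmaxAt (Θ ω) 0}, H (Θ ω) ∂P ≠ ∞) ↔
        ∫⁻ ω, H (Θ ω) / (∑' j : ℤ, (‖Θ ω j‖₊ : ℝ≥0∞) ^ α) ∂P ≠ ∞) := by
  classical
  -- basic measurability
  have hΘeq : Θ = fun ω => ‖Y ω 0‖⁻¹ • Y ω := funext hΘdef
  have hΘmeas : Measurable Θ := by
    rw [hΘeq]
    exact measurable_pi_lambda _ fun j =>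
      (((measurable_pi_apply 0).comp hYmeas).norm.inv).smul ((measurable_pi_apply j).comp hYmeas)
  have hUmeas : MeasurableSet {y : ℤ → V | 1 < ‖y 0‖} :=
    measurableSet_lt measurable_const (measurable_pi_apply 0).norm
  have hHsh : ∀ (k : ℤ) (x : ℤ → V), H (backshift k x) = H x := H_backshift_int H hHshift
  -- law transfer
  have hlawF : ∀ G : (ℤ → V) → ℝ≥0∞, Measurable G →
      ∫⁻ ω, G (Y ω) ∂P = ∫⁻ y in {y : ℤ → V | 1 < ‖y 0‖}, G y ∂ν := by
    intro G hG
    rw [← lintegral_map hG hYmeas, hYlaw]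
  have hlawS : ∀ S : Set (ℤ → V), MeasurableSet S →
      P (Y ⁻¹' S) = ν (S ∩ {y : ℤ → V | 1 < ‖y 0‖}) := by
    intro S hS
    rw [← Measure.map_apply hYmeas hS, hYlaw, Measure.restrict_apply hS]
  -- a.e. facts
  have hY1 : P {ω | 1 < ‖Y ω 0‖} = 1 := by
    have := hPareto 1 le_rfl
    simpa [Real.one_rpow] using this
  have haeY1 : ∀ᵐ ω ∂P, 1 < ‖Y ω 0‖ := by
    rw [ae_iff]
    have hms : MeasurableSet {ω | 1 < ‖Y ω 0‖} :=
      measurableSet_lt measurable_const ((measurable_pi_apply 0).comp hYmeas).norm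
    have : {ω | ¬ (1 < ‖Y ω 0‖)} = {ω | 1 < ‖Y ω 0‖}ᶜ := rfl
    rw [this, measure_compl hms (measure_ne_top _ _), hY1, measure_univ, tsub_self]
  have hTset : MeasurableSet {x : ℤ → V | T x} := measurableSet_T
  have haeTY : ∀ᵐ ω ∂P, T (Y ω) := by
    rw [ae_iff]
    have hms : MeasurableSet {ω | T (Y ω)} := hTset.preimage hYmeas
    have : {ω | ¬ T (Y ω)} = {ω | T (Y ω)}ᶜ := rfl
    rw [this, measure_compl hms (measure_ne_top _ _), measure_univ]
    rw [show P {ω | T (Y ω)} = 1 from hY0, tsub_self]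
  have haeΘnorm : ∀ᵐ ω ∂P, ‖Θ ω 0‖ = 1 := by
    refine haeY1.mono fun ω h => ?_
    have hpos : (0:ℝ) < ‖Y ω 0‖ := lt_trans zero_lt_one h
    rw [hΘdef ω, Pi.smul_apply, norm_smul, Real.norm_eq_abs, abs_of_pos (inv_pos.mpr hpos),
      inv_mul_cancel₀ hpos.ne']
  have haeTΘ : ∀ᵐ ω ∂P, T (Θ ω) := by
    refine haeTY.mono fun ω h => ?_
    rw [hΘdef ω]
    exact h.smul _
  have haeEU : ∀ᵐ ω ∂P, ∃! j, InfargmaxAt (Θ ω) j := by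
    refine (haeTΘ.and haeΘnorm).mono fun ω ⟨h1, h2⟩ => ?_
    have hne : Θ ω ≠ 0 := by
      intro h0
      rw [h0] at h2
      simp at h2
    obtain ⟨j, hj⟩ := h1.exists_infargmaxAt hne
    exact ⟨j, hj, fun k hk => infargmaxAt_unique hk hj⟩
  -- ν-a.e. convergence to 0
  have hmTc : MeasurableSet {y : ℤ → V | ¬ T y} := hTset.compl
  have hνN : ν ({y : ℤ → V | y 0 ≠ 0} ∩ {y : ℤ → V | ¬ T y}) = 0 := by
    have hne : MeasurableSet {y : ℤ → V | y 0 ≠ 0} :=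
      ((measurableSet_singleton (0:V)).preimage (measurable_pi_apply 0)).compl
    have key : ν ({y : ℤ → V | y 0 ≠ 0} ∩ {y : ℤ → V | ¬ T y})
        = ∫⁻ y in {y : ℤ → V | y 0 ≠ 0}, ind (¬ T y) ∂ν := by
      rw [inter_comm, ← Measure.restrict_apply hmTc]
      exact (lintegral_ind (ν.restrict {y : ℤ → V | y 0 ≠ 0}) hmTc).symm
    rw [key, hpolar (fun y => ind (¬ T y)) (measurable_ind hmTc)]
    have hz : ∀ r ∈ Ioi (0:ℝ),
        (∫⁻ ω, ind (¬ T (r • Θ ω)) ∂P) * ENNReal.ofReal (α * r ^ (-α - 1))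
          = (fun _ : ℝ => (0:ℝ≥0∞)) r := by
      intro r hr
      have h0 : ∫⁻ ω, ind (¬ T (r • Θ ω)) ∂P = 0 := by
        rw [← lintegral_zero (μ := P)]
        refine lintegral_congr_ae (haeTΘ.mono fun ω hω => ?_)
        exact ind_neg (fun hnT => hnT (hω.smul r))
      rw [h0, zero_mul]
    rw [setLIntegral_congr_fun measurableSet_Ioi hz]
    simp
  have hνaeT : ∀ᵐ y ∂ν, y 0 ≠ 0 → T y := by
    rw [ae_iff]
    have hrw : {y : ℤ → V | ¬ (y 0 ≠ 0 → T y)}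
        = {y : ℤ → V | y 0 ≠ 0} ∩ {y : ℤ → V | ¬ T y} := by
      ext y
      simp only [mem_setOf_eq, mem_inter_iff]
      tauto
    rw [hrw]
    exact hνN
  -- the time change formula
  have hTCF : ∀ (k : ℤ) (Φ : (ℤ → V) → ℝ≥0∞), Measurable Φ →
      (∀ r : ℝ, 0 < r → ∀ y, Φ (r • y) = Φ y) → (∀ y : ℤ → V, y 0 = 0 → Φ y = 0) →
      ∫⁻ ω, Φ (backshift k (Θ ω)) ∂P = ∫⁻ ω, Φ (Θ ω) * (‖Θ ω k‖₊ : ℝ≥0∞) ^ α ∂P := by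
    intro k Φ hm hhom hz
    exact (master1 hα hΘmeas hpolar hνshift haeΘnorm k Φ hm hhom).symm.trans
      (master2 hα hΘmeas hpolar k Φ hm hhom hz)
  -- conjunct 2
  have hconj2 : ∫⁻ ω in {ω | InfargmaxAt (Θ ω) 0}, H (Θ ω) ∂P
      = ∫⁻ ω, H (Θ ω) / (∑' j : ℤ, (‖Θ ω j‖₊ : ℝ≥0∞) ^ α) ∂P :=
    conj2_of_TCF hα hΘmeas hH hHsh hHhom haeΘnorm haeEU hTCF
  -- conjunct 1
  set AΩ : Set Ω := {ω | ∀ j : ℤ, j ≤ -1 → ‖Y ω j‖ ≤ 1} with hAΩ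
  set f : Ω → ℤ → V := fun ω => (⨆ j : ℤ, ‖Y ω j‖)⁻¹ • Y ω with hf
  have hfm : Measurable f := by
    have h1 : Measurable fun ω => (⨆ j : ℤ, ‖Y ω j‖)⁻¹ :=
      (Measurable.iSup fun j => ((measurable_pi_apply j).comp hYmeas).norm).inv
    exact measurable_pi_lambda _ fun j => h1.smul ((measurable_pi_apply j).comp hYmeas)
  have hA'meas : MeasurableSet {y : ℤ → V | ∀ j : ℤ, j ≤ -1 → ‖y j‖ ≤ 1} := by
    have h : {y : ℤ → V | ∀ j : ℤ, j ≤ -1 → ‖y j‖ ≤ 1}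
        = ⋂ (j : ℤ), ⋂ (_ : j ≤ -1), {y : ℤ → V | ‖y j‖ ≤ 1} := by
      ext y; simp [mem_iInter]
    rw [h]
    exact MeasurableSet.iInter fun j => MeasurableSet.iInter fun _ =>
      measurableSet_le (measurable_pi_apply j).norm measurable_const
  have hAΩmeas : MeasurableSet AΩ := hA'meas.preimage hYmeas
  have hpAtop : P AΩ ≠ ∞ := measure_ne_top _ _
  have hpA0 : P AΩ ≠ 0 := by
    intro h0
    have hrest : P.restrict AΩ = 0 := Measure.restrict_eq_zero.mpr h0
    have hcond : ProbabilityTheory.cond P AΩ = 0 := by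
      show (P AΩ)⁻¹ • P.restrict AΩ = 0
      rw [hrest, smul_zero]
    have hmap : P'.map Q = 0 := by
      rw [hQlaw, hcond]
      simp
    have h1 : (P'.map Q) univ = 1 := by
      rw [Measure.map_apply hQmeas MeasurableSet.univ, preimage_univ, measure_univ]
    rw [hmap] at h1
    simp at h1
  -- compute ∫ H(Q)
  have hQ1 : ∫⁻ ω', H (Q ω') ∂P' = (P AΩ)⁻¹ * ∫⁻ ω in AΩ, H (f ω) ∂P := by
    calc ∫⁻ ω', H (Q ω') ∂P' = ∫⁻ y, H y ∂(P'.map Q) := (lintegral_map hH hQmeas).symm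
      _ = ∫⁻ ω, H (f ω) ∂(ProbabilityTheory.cond P AΩ) := by
          rw [hQlaw]
          exact lintegral_map hH hfm
      _ = (P AΩ)⁻¹ * ∫⁻ ω in AΩ, H (f ω) ∂P := lintegral_smul_measure _ _
  -- move to ν
  set W : (ℤ → V) → ℝ≥0∞ := fun y => H ((rsup y)⁻¹ • y) with hW
  have hWm : Measurable W := hH.comp measurable_rscale
  have hWsh : ∀ (k : ℤ) (y : ℤ → V), W (backshift k y) = W y := by
    intro k y
    rw [hW]
    simp only []
    rw [rsup_backshift, show (rsup y)⁻¹ • backshift k y = backshift k ((rsup y)⁻¹ • y) from rfl,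
      hHsh k]
  have hAν : ∫⁻ ω in AΩ, H (f ω) ∂P
      = ∫⁻ y, W y * ind (1 < ‖y 0‖ ∧ ∀ j : ℤ, j ≤ -1 → ‖y j‖ ≤ 1) ∂ν := by
    have h1 : ∫⁻ ω in AΩ, H (f ω) ∂P = ∫⁻ ω, H (f ω) * ind (ω ∈ AΩ) ∂P :=
      (lintegral_mul_ind P (fun ω => H (f ω)) hAΩmeas).symm
    have h2 : ∫⁻ ω, H (f ω) * ind (ω ∈ AΩ) ∂P
        = ∫⁻ ω, (fun y => W y * ind (∀ j : ℤ, j ≤ -1 → ‖y j‖ ≤ 1)) (Y ω) ∂P :=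
      lintegral_congr fun ω => rfl
    have h3 : ∫⁻ ω, (fun y => W y * ind (∀ j : ℤ, j ≤ -1 → ‖y j‖ ≤ 1)) (Y ω) ∂P
        = ∫⁻ y in {y : ℤ → V | 1 < ‖y 0‖},
            W y * ind (∀ j : ℤ, j ≤ -1 → ‖y j‖ ≤ 1) ∂ν :=
      hlawF _ (hWm.mul (measurable_ind hA'meas))
    have h4 : ∫⁻ y in {y : ℤ → V | 1 < ‖y 0‖}, W y * ind (∀ j : ℤ, j ≤ -1 → ‖y j‖ ≤ 1) ∂ν
        = ∫⁻ y, (W y * ind (∀ j : ℤ, j ≤ -1 → ‖y j‖ ≤ 1)) * ind (1 < ‖y 0‖) ∂ν :=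
      (lintegral_mul_ind ν (fun y => W y * ind (∀ j : ℤ, j ≤ -1 → ‖y j‖ ≤ 1)) hUmeas).symm
    rw [h1, h2, h3, h4]
    refine lintegral_congr fun y => ?_
    rw [mul_assoc, ind_mul_ind]
    exact congrArg (W y * ·) (ind_congr (by tauto))
  -- decompose and rescale
  have hdec := decompose_IAt ν hνshift hνaeT W hWm hWsh
  have hW0 : ∫⁻ y, (W y * ind (InfargmaxAt y 0)) * ind (1 < ‖y 0‖) ∂ν
      = ∫⁻ y, (H (‖y 0‖⁻¹ • y) * ind (InfargmaxAt y 0)) * ind (1 < ‖y 0‖) ∂ν := by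
    refine lintegral_congr fun y => ?_
    by_cases hI : InfargmaxAt y 0
    · rw [hW]
      simp only []
      rw [rsup_eq_of_infargmaxAt hI]
    · rw [ind_neg hI, mul_zero, zero_mul, mul_zero, zero_mul]
  have hback : ∫⁻ y, (H (‖y 0‖⁻¹ • y) * ind (InfargmaxAt y 0)) * ind (1 < ‖y 0‖) ∂ν
      = ∫⁻ ω in {ω | InfargmaxAt (Θ ω) 0}, H (Θ ω) ∂P := by
    have h1 : ∫⁻ y, (H (‖y 0‖⁻¹ • y) * ind (InfargmaxAt y 0)) * ind (1 < ‖y 0‖) ∂ν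
        = ∫⁻ y in {y : ℤ → V | 1 < ‖y 0‖},
            H (‖y 0‖⁻¹ • y) * ind (InfargmaxAt y 0) ∂ν :=
      lintegral_mul_ind ν (fun y => H (‖y 0‖⁻¹ • y) * ind (InfargmaxAt y 0)) hUmeas
    have h2 : ∫⁻ y in {y : ℤ → V | 1 < ‖y 0‖}, H (‖y 0‖⁻¹ • y) * ind (InfargmaxAt y 0) ∂ν
        = ∫⁻ ω, H (‖Y ω 0‖⁻¹ • Y ω) * ind (InfargmaxAt (Y ω) 0) ∂P :=
      (hlawF _ ((hH.comp (measurable_scale 0)).mul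
        (measurable_ind (measurableSet_infargmaxAt 0)))).symm
    have h3 : ∫⁻ ω, H (‖Y ω 0‖⁻¹ • Y ω) * ind (InfargmaxAt (Y ω) 0) ∂P
        = ∫⁻ ω, H (Θ ω) * ind (InfargmaxAt (Θ ω) 0) ∂P := by
      refine lintegral_congr_ae (haeY1.mono fun ω hω => ?_)
      have hc : (0:ℝ) < ‖Y ω 0‖⁻¹ := inv_pos.mpr (lt_trans zero_lt_one hω)
      try simp only []
      rw [← hΘdef ω, ind_congr (show InfargmaxAt (Y ω) 0 ↔ InfargmaxAt (Θ ω) 0 by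
        rw [hΘdef ω]
        exact (infargmaxAt_smul hc (Y ω) 0).symm)]
    have h4 : ∫⁻ ω, H (Θ ω) * ind (InfargmaxAt (Θ ω) 0) ∂P
        = ∫⁻ ω in {ω | InfargmaxAt (Θ ω) 0}, H (Θ ω) ∂P := by
      exact lintegral_mul_ind P (fun ω => H (Θ ω))
        (show MeasurableSet {ω | InfargmaxAt (Θ ω) 0} from
          (measurableSet_infargmaxAt 0).preimage hΘmeas)
    rw [h1, h2, h3, h4]
  -- ϑ = P(AΩ)
  have hθpA : P {ω | ∀ j : ℤ, 1 ≤ j → ‖Y ω j‖ ≤ 1} = P AΩ := by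
    have hL'meas : MeasurableSet {y : ℤ → V | ∀ j : ℤ, 1 ≤ j → ‖y j‖ ≤ 1} := by
      have h : {y : ℤ → V | ∀ j : ℤ, 1 ≤ j → ‖y j‖ ≤ 1}
          = ⋂ (j : ℤ), ⋂ (_ : 1 ≤ j), {y : ℤ → V | ‖y j‖ ≤ 1} := by
        ext y; simp [mem_iInter]
      rw [h]
      exact MeasurableSet.iInter fun j => MeasurableSet.iInter fun _ =>
        measurableSet_le (measurable_pi_apply j).norm measurable_const
    have e1 : P {ω | ∀ j : ℤ, 1 ≤ j → ‖Y ω j‖ ≤ 1}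
        = ν ({y : ℤ → V | ∀ j : ℤ, 1 ≤ j → ‖y j‖ ≤ 1} ∩ {y : ℤ → V | 1 < ‖y 0‖}) :=
      hlawS _ hL'meas
    have e2 : P AΩ
        = ν ({y : ℤ → V | ∀ j : ℤ, j ≤ -1 → ‖y j‖ ≤ 1} ∩ {y : ℤ → V | 1 < ‖y 0‖}) :=
      hlawS _ hA'meas
    have e3 : {y : ℤ → V | ∀ j : ℤ, 1 ≤ j → ‖y j‖ ≤ 1} ∩ {y : ℤ → V | 1 < ‖y 0‖}
        = {y : ℤ → V | 1 < ‖y 0‖ ∧ ∀ j : ℤ, 1 ≤ j → ‖y j‖ ≤ 1} := by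
      ext y; simp only [mem_inter_iff, mem_setOf_eq]; tauto
    have e4 : {y : ℤ → V | ∀ j : ℤ, j ≤ -1 → ‖y j‖ ≤ 1} ∩ {y : ℤ → V | 1 < ‖y 0‖}
        = {y : ℤ → V | 1 < ‖y 0‖ ∧ ∀ j : ℤ, j ≤ -1 → ‖y j‖ ≤ 1} := by
      ext y; simp only [mem_inter_iff, mem_setOf_eq]; tauto
    rw [e1, e2, e3, e4, theta_eq ν hνshift hνaeT]
  have hconj1 : P {ω | ∀ j : ℤ, 1 ≤ j → ‖Y ω j‖ ≤ 1} * ∫⁻ ω', H (Q ω') ∂P'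
      = ∫⁻ ω in {ω | InfargmaxAt (Θ ω) 0}, H (Θ ω) ∂P := by
    rw [hθpA, hQ1, ← mul_assoc, ENNReal.mul_inv_cancel hpA0 hpAtop, one_mul, hAν, hdec, hW0,
      hback]
  refine ⟨hconj1, hconj2, ?_, ?_⟩
  · have hϑ0 : P {ω | ∀ j : ℤ, 1 ≤ j → ‖Y ω j‖ ≤ 1} ≠ 0 := by rw [hθpA]; exact hpA0
    have hϑtop : P {ω | ∀ j : ℤ, 1 ≤ j → ‖Y ω j‖ ≤ 1} ≠ ∞ := measure_ne_top _ _
    rw [← hconj1]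
    constructor
    · intro hx hcon
      rw [ENNReal.mul_eq_top] at hcon
      rcases hcon with ⟨_, hx'⟩ | ⟨ht, _⟩
      · exact hx hx'
      · exact hϑtop ht
    · intro hx hcon
      exact hx (by rw [hcon, ENNReal.mul_top hϑ0])
  · rw [hconj2]
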